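/- arXiv:2208.01229 — 5 statements merged into one kernel-verified Lean document; each statement's English description precedes it below -/
import Mathlib

section
/- Let k' be a squarefree odd positive integer with exactly L prime factors, and let B > 0. Then ∑_{d | k'} ∑_{e | d} ∑_{a ≤ B√(e/d), gcd(a,d) = e} μ(a)² ≤ B · ((4 + √3)/3)^L, where μ is the Möbius function. -/
open ArithmeticFunction Finset
open scoped ArithmeticFunction.zeta

noncomputable def gfun : ArithmeticFunction ℝ :=
  ⟨fun n => 1 / Real.sqrt n, by simp⟩

lemma gfun_apply (n : ℕ) : gfun n = 1 / Real.sqrt n := rfl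

lemma gfun_mult : gfun.IsMultiplicative := by
  refine ⟨by simp [gfun_apply], fun {m n} _ => ?_⟩
  simp [gfun_apply, Nat.cast_mul, Real.sqrt_mul (Nat.cast_nonneg m)]
  ring

noncomputable def Ffun : ArithmeticFunction ℝ :=
  gfun.pmul ((ζ : ArithmeticFunction ℝ) * gfun)

lemma Ffun_mult : Ffun.IsMultiplicative :=
  gfun_mult.pmul ((isMultiplicative_zeta.natCast).mul gfun_mult)

lemma Ffun_apply (d : ℕ) : Ffun d = ∑ e ∈ d.divisors, 1 / (Real.sqrt e * Real.sqrt d) := by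
  simp only [Ffun, pmul_apply, coe_zeta_mul_apply, gfun_apply, Finset.mul_sum]
  exact Finset.sum_congr rfl fun e _ => by ring

lemma factor_bound {p : ℕ} (hp : p.Prime) (h3 : 3 ≤ p) :
    ∑ d ∈ p.divisors, Ffun d ≤ (4 + Real.sqrt 3) / 3 := by
  have h3' : (3:ℝ) ≤ (p:ℝ) := by exact_mod_cast h3
  have hs3 : (0:ℝ) < Real.sqrt 3 := Real.sqrt_pos.mpr (by norm_num)
  have hsp : Real.sqrt 3 ≤ Real.sqrt p := Real.sqrt_le_sqrt h3'
  have hsp0 : (0:ℝ) < Real.sqrt p := lt_of_lt_of_le hs3 hsp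
  have h1 : Ffun 1 = 1 := Ffun_mult.1
  have hpp : Real.sqrt p * Real.sqrt p = (p:ℝ) := Real.mul_self_sqrt (Nat.cast_nonneg p)
  have hs33 : Real.sqrt 3 * Real.sqrt 3 = 3 := Real.mul_self_sqrt (by norm_num)
  have hFp : Ffun p = 1 / (Real.sqrt p * Real.sqrt p) + 1 / Real.sqrt p := by
    rw [Ffun_apply, hp.divisors]
    rw [Finset.sum_pair hp.one_lt.ne]
    simp only [Nat.cast_one, Real.sqrt_one]
    ring
  rw [hp.divisors, Finset.sum_pair hp.one_lt.ne, h1, hFp]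
  have b1 : 1 / (Real.sqrt p * Real.sqrt p) ≤ 1 / 3 := by
    rw [hpp]; exact one_div_le_one_div_of_le (by norm_num) h3'
  have b2 : 1 / Real.sqrt p ≤ 1 / Real.sqrt 3 := one_div_le_one_div_of_le hs3 hsp
  have e1 : 1 / Real.sqrt 3 = Real.sqrt 3 / 3 := by
    rw [div_eq_div_iff hs3.ne' (by norm_num : (0:ℝ) < 3).ne']; linarith [hs33]
  have : (4 + Real.sqrt 3) / 3 = 1 + 1/3 + 1 / Real.sqrt 3 := by
    rw [e1]; ring
  rw [this]
  linarith

lemma T_bound (k' L : ℕ) (hk : 0 < k') (hsq : Squarefree k') (hodd : Odd k')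
    (hL : k'.primeFactors.card = L) :
    ∑ d ∈ k'.divisors, Ffun d ≤ ((4 + Real.sqrt 3) / 3) ^ L := by
  have hT : ((ζ : ArithmeticFunction ℝ) * Ffun).IsMultiplicative :=
    (isMultiplicative_zeta.natCast).mul Ffun_mult
  have hk' : k' = ∏ p ∈ k'.primeFactors, p := (Nat.prod_primeFactors_of_squarefree hsq).symm
  have key : ∑ d ∈ k'.divisors, Ffun d = ∏ p ∈ k'.primeFactors,
      ∑ d ∈ p.divisors, Ffun d := by
    rw [← coe_zeta_mul_apply]
    conv_lhs => rw [hk']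
    rw [hT.map_prod_of_subset_primeFactors k' _ le_rfl]
    exact Finset.prod_congr rfl fun p _ => coe_zeta_mul_apply
  rw [key, ← hL]
  rw [← Finset.prod_const]
  refine Finset.prod_le_prod (fun p hp => ?_) (fun p hp => ?_)
  · refine Finset.sum_nonneg fun d _ => ?_
    rw [Ffun_apply]
    exact Finset.sum_nonneg fun e _ => by positivity
  · have hp' := Nat.prime_of_mem_primeFactors hp
    have h3 : 3 ≤ p := by
      rcases hp'.eq_two_or_odd' with h2 | hoddp
      · exfalso
        have hdvd := Nat.dvd_of_mem_primeFactors hp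
        rw [h2] at hdvd
        rw [Nat.odd_iff] at hodd
        rcases hdvd with ⟨c, hc⟩
        omega
      · have h2 := hp'.two_le
        rcases hoddp with ⟨c, hc⟩
        omega
    exact factor_bound hp' h3

lemma inner_bound (B : ℝ) (hB : 0 < B) (d e : ℕ) (hd : 0 < d) (he : 0 < e) (hed : e ∣ d) :
    ∑ a ∈ (Finset.Icc 1 ⌊B * Real.sqrt ((e : ℝ) / d)⌋₊).filter (fun a => Nat.gcd a d = e),
      ((moebius a : ℝ)) ^ 2 ≤ B * (1 / (Real.sqrt e * Real.sqrt d)) := by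
  set N := ⌊B * Real.sqrt ((e : ℝ) / d)⌋₊ with hN
  have hse : (0:ℝ) < Real.sqrt e := Real.sqrt_pos.mpr (by exact_mod_cast he)
  have hsd : (0:ℝ) < Real.sqrt d := Real.sqrt_pos.mpr (by exact_mod_cast hd)
  have step1 : ∑ a ∈ (Finset.Icc 1 N).filter (fun a => Nat.gcd a d = e),
      ((moebius a : ℝ)) ^ 2 ≤ ((Finset.Icc 1 N).filter (fun a => Nat.gcd a d = e)).card := by
    calc _ ≤ ∑ _a ∈ (Finset.Icc 1 N).filter (fun a => Nat.gcd a d = e), (1:ℝ) := by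
            refine Finset.sum_le_sum fun a _ => ?_
            have : (moebius a) ^ 2 ≤ (1:ℤ) := by
              rw [moebius_sq]; split <;> norm_num
            calc ((moebius a : ℝ)) ^ 2 = (((moebius a)^2 : ℤ) : ℝ) := by push_cast; ring
              _ ≤ 1 := by exact_mod_cast this
      _ = _ := by simp
  have step2 : ((Finset.Icc 1 N).filter (fun a => Nat.gcd a d = e)).card ≤ N / e := by
    rw [← Nat.Ioc_filter_dvd_card_eq_div]
    apply Finset.card_le_card
    intro a ha
    simp only [Finset.mem_filter, Finset.mem_Icc, Finset.mem_Ioc] at ha ⊢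
    refine ⟨⟨by omega, ha.1.2⟩, ?_⟩
    rw [← ha.2]; exact Nat.gcd_dvd_left a d
  have step3 : ((N / e : ℕ) : ℝ) ≤ B * Real.sqrt ((e : ℝ) / d) / e := by
    calc ((N / e : ℕ) : ℝ) ≤ (N : ℝ) / e := Nat.cast_div_le
      _ ≤ B * Real.sqrt ((e : ℝ) / d) / e := by
          gcongr
          exact Nat.floor_le (by positivity)
  have key : B * Real.sqrt ((e : ℝ) / d) / e = B * (1 / (Real.sqrt e * Real.sqrt d)) := by
    rw [Real.sqrt_div (by positivity) d]
    rw [show ((e:ℝ)) = Real.sqrt e * Real.sqrt e from (Real.mul_self_sqrt (by positivity)).symm]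
    have hee : √(e:ℝ) ^ 2 = (e:ℝ) := Real.sq_sqrt (by positivity)
    field_simp
    linear_combination Real.sq_sqrt (by positivity : (0:ℝ) ≤ √(e:ℝ) ^ 2)
  calc _ ≤ (((Finset.Icc 1 N).filter (fun a => Nat.gcd a d = e)).card : ℝ) := step1
    _ ≤ ((N / e : ℕ) : ℝ) := by exact_mod_cast step2
    _ ≤ B * Real.sqrt ((e : ℝ) / d) / e := step3
    _ = _ := key

open ArithmeticFunction in
theorem divisor_triple_sum_moebius_bound (k' L : ℕ) (B : ℝ) (hk : 0 < k')
    (hsq : Squarefree k') (hodd : Odd k') (hL : k'.primeFactors.card = L) (hB : 0 < B) :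
    ∑ d ∈ k'.divisors, ∑ e ∈ d.divisors,
        ∑ a ∈ (Finset.Icc 1 ⌊B * Real.sqrt ((e : ℝ) / d)⌋₊).filter (fun a => Nat.gcd a d = e),
          ((moebius a : ℝ)) ^ 2 ≤ B * ((4 + Real.sqrt 3) / 3) ^ L := by
  have step : ∑ d ∈ k'.divisors, ∑ e ∈ d.divisors,
      ∑ a ∈ (Finset.Icc 1 ⌊B * Real.sqrt ((e : ℝ) / d)⌋₊).filter (fun a => Nat.gcd a d = e),
        ((moebius a : ℝ)) ^ 2 ≤ B * ∑ d ∈ k'.divisors, Ffun d := by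
    rw [Finset.mul_sum]
    refine Finset.sum_le_sum fun d hd => ?_
    have hd0 : 0 < d := Nat.pos_of_mem_divisors hd
    rw [Ffun_apply, Finset.mul_sum]
    refine Finset.sum_le_sum fun e he => ?_
    exact inner_bound B hB d e hd0 (Nat.pos_of_mem_divisors he) (Nat.dvd_of_mem_divisors he)
  refine step.trans ?_
  exact mul_le_mul_of_nonneg_left (T_bound k' L hk hsq hodd hL) hB.le
end

section
/- For every real x ≥ 8, we have ∑_{a > x} μ(a)²/φ(a²) ≤ ∫_{⌊x⌋}^{∞} (e^γ · log(log t)/t² + 3/t²) dt, where the sum is over integers a > x, μ is the Möbius function, φ is Euler's totient, and γ is the Euler–Mascheroni constant. -/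
open Real MeasureTheory ArithmeticFunction


lemma tailsq (k : ℕ) (hk : 1 ≤ k) :
    ∑' (i : ℕ), (1:ℝ)/((i:ℝ)+k)^2 ≤ 1/((k:ℝ)-1/2) := by
  have hk' : (1:ℝ) ≤ (k:ℝ) := by exact_mod_cast hk
  set H : ℕ → ℝ := fun i => 1/((i:ℝ)+k-1/2) with hH
  have hHn : ∀ n, 0 ≤ H n := by
    intro n
    apply one_div_nonneg.2
    have : (0:ℝ) ≤ (n:ℝ) := n.cast_nonneg
    linarith
  apply Real.tsum_le_of_sum_range_le
  · intro n; positivity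
  · intro n
    calc ∑ i ∈ Finset.range n, (1:ℝ)/((i:ℝ)+k)^2
        ≤ ∑ i ∈ Finset.range n, (H i - H (i+1)) := by
          apply Finset.sum_le_sum
          intro i _
          have hx : (1:ℝ) ≤ (i:ℝ)+k := by
            have : (0:ℝ) ≤ (i:ℝ) := i.cast_nonneg
            linarith
          have h1 : H i - H (i+1) = 1/(((i:ℝ)+k)^2 - 1/4) := by
            simp only [hH]
            push_cast
            rw [div_sub_div _ _ (by nlinarith) (by nlinarith)]
            ring_nf
          rw [h1]
          apply one_div_le_one_div_of_le (by nlinarith)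
          nlinarith
      _ = H 0 - H n := Finset.sum_range_sub' H n
      _ ≤ H 0 := by linarith [hHn n]
      _ = 1/((k:ℝ)-1/2) := by simp [hH]

lemma tailcube (k : ℕ) (hk : 2 ≤ k) :
    ∑' (i : ℕ), (1:ℝ)/((i:ℝ)+k)^3 ≤ 1/(2*((k:ℝ)-1)^2) := by
  have hk' : (2:ℝ) ≤ (k:ℝ) := by exact_mod_cast hk
  set H : ℕ → ℝ := fun i => 1/(2*((i:ℝ)+k-1)^2) with hH
  have hHn : ∀ n, 0 ≤ H n := by
    intro n
    apply one_div_nonneg.2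
    have : (0:ℝ) ≤ (n:ℝ) := n.cast_nonneg
    positivity
  apply Real.tsum_le_of_sum_range_le
  · intro n; positivity
  · intro n
    calc ∑ i ∈ Finset.range n, (1:ℝ)/((i:ℝ)+k)^3
        ≤ ∑ i ∈ Finset.range n, (H i - H (i+1)) := by
          apply Finset.sum_le_sum
          intro i _
          have hx : (2:ℝ) ≤ (i:ℝ)+k := by
            have : (0:ℝ) ≤ (i:ℝ) := i.cast_nonneg
            linarith
          have h1 : H (i+1) = 1/(2*((i:ℝ)+k)^2) := by
            simp only [hH]; push_cast; ring_nf
          have h2 : H i = 1/(2*((i:ℝ)+k-1)^2) := rfl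
          rw [h1, h2, div_sub_div _ _ (by nlinarith) (by nlinarith),
            div_le_div_iff₀ (by nlinarith) (by nlinarith)]
          nlinarith
      _ = H 0 - H n := Finset.sum_range_sub' H n
      _ ≤ H 0 := by linarith [hHn n]
      _ = 1/(2*((k:ℝ)-1)^2) := by simp [hH]

lemma summable_invsq : Summable (fun m : ℕ => (1:ℝ)/(m:ℝ)^2) := by
  exact_mod_cast (summable_one_div_nat_pow (p := 2)).2 one_lt_two

lemma zeta2_le : ∑' (m : ℕ), (1:ℝ)/(m:ℝ)^2 ≤ 1.65 := by
  have h5 := Summable.sum_add_tsum_nat_add (f := fun m : ℕ => (1:ℝ)/(m:ℝ)^2) 5 summable_invsq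
  rw [← h5]
  have ht : ∑' (i : ℕ), (1:ℝ)/((i+5:ℕ):ℝ)^2 ≤ 1/((5:ℝ)-1/2) := by
    have := tailsq 5 (by norm_num)
    convert this using 2 with i
    · push_cast; ring
    · norm_num
  have hhead : ∑ i ∈ Finset.range 5, (1:ℝ)/(i:ℝ)^2 = 1 + 1/4 + 1/9 + 1/16 := by
    simp [Finset.sum_range_succ]
    norm_num
  rw [hhead]
  have : ∑' (i : ℕ), (1:ℝ)/(((i:ℕ):ℝ)+(5:ℕ))^2 ≤ 1/((5:ℝ)-1/2) := tailsq 5 (by norm_num)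
  calc (1:ℝ) + 1/4 + 1/9 + 1/16 + ∑' (i : ℕ), (1:ℝ)/((i+5:ℕ):ℝ)^2
      ≤ 1 + 1/4 + 1/9 + 1/16 + 1/((5:ℝ)-1/2) := by linarith
    _ ≤ 1.65 := by norm_num

-- ite version: tail of 1/m^2 from k
lemma tailsq_ite (k : ℕ) (hk : 1 ≤ k) :
    ∑' (m : ℕ), (if k ≤ m then (1:ℝ)/(m:ℝ)^2 else 0) ≤ 1/((k:ℝ)-1/2) := by
  have hsum : Summable (fun m : ℕ => if k ≤ m then (1:ℝ)/(m:ℝ)^2 else 0) := by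
    apply Summable.of_nonneg_of_le (f := fun m : ℕ => (1:ℝ)/(m:ℝ)^2)
    · intro b; positivity
    · intro b; split
      · exact le_rfl
      · positivity
    · exact summable_invsq
  have h5 := Summable.sum_add_tsum_nat_add (f := fun m : ℕ => if k ≤ m then (1:ℝ)/(m:ℝ)^2 else 0) k hsum
  rw [← h5]
  have h1 : ∑ i ∈ Finset.range k, (if k ≤ i then (1:ℝ)/(i:ℝ)^2 else 0) = 0 := by
    apply Finset.sum_eq_zero
    intro i hi
    rw [if_neg]
    exact Nat.not_le.2 (Finset.mem_range.1 hi)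
  rw [h1, zero_add]
  have h2 : ∀ i : ℕ, (if k ≤ i + k then (1:ℝ)/((i+k:ℕ):ℝ)^2 else 0) = (1:ℝ)/((i:ℝ)+(k:ℝ))^2 := by
    intro i
    rw [if_pos (Nat.le_add_left k i)]
    push_cast; ring_nf
  calc ∑' (i : ℕ), (if k ≤ i + k then (1:ℝ)/((i+k:ℕ):ℝ)^2 else 0)
      = ∑' (i : ℕ), (1:ℝ)/((i:ℝ)+(k:ℝ))^2 := by exact tsum_congr h2
    _ ≤ 1/((k:ℝ)-1/2) := tailsq k hk

lemma tailcube_ite (k : ℕ) (hk : 2 ≤ k) :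
    ∑' (m : ℕ), (if k ≤ m then (1:ℝ)/(m:ℝ)^3 else 0) ≤ 1/(2*((k:ℝ)-1)^2) := by
  have hsum : Summable (fun m : ℕ => if k ≤ m then (1:ℝ)/(m:ℝ)^3 else 0) := by
    apply Summable.of_nonneg_of_le (f := fun m : ℕ => (1:ℝ)/(m:ℝ)^3)
    · intro b; positivity
    · intro b; split
      · exact le_rfl
      · positivity
    · exact_mod_cast (summable_one_div_nat_pow (p := 3)).2 (by norm_num)
  have h5 := Summable.sum_add_tsum_nat_add (f := fun m : ℕ => if k ≤ m then (1:ℝ)/(m:ℝ)^3 else 0) k hsum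
  rw [← h5]
  have h1 : ∑ i ∈ Finset.range k, (if k ≤ i then (1:ℝ)/(i:ℝ)^3 else 0) = 0 := by
    apply Finset.sum_eq_zero
    intro i hi
    rw [if_neg]
    exact Nat.not_le.2 (Finset.mem_range.1 hi)
  rw [h1, zero_add]
  have h2 : ∀ i : ℕ, (if k ≤ i + k then (1:ℝ)/((i+k:ℕ):ℝ)^3 else 0) = (1:ℝ)/((i:ℝ)+(k:ℝ))^3 := by
    intro i
    rw [if_pos (Nat.le_add_left k i)]
    push_cast; ring_nf
  calc ∑' (i : ℕ), (if k ≤ i + k then (1:ℝ)/((i+k:ℕ):ℝ)^3 else 0)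
      = ∑' (i : ℕ), (1:ℝ)/((i:ℝ)+(k:ℝ))^3 := by exact tsum_congr h2
    _ ≤ 1/(2*((k:ℝ)-1)^2) := tailcube k hk

lemma telescope_prod (S : Finset ℕ) : ∀ (m : ℕ), 2 ≤ m → (∀ k ∈ S, m ≤ k) →
    ∏ k ∈ S, ((k:ℝ)^2/((k:ℝ)^2-1)) ≤ (m:ℝ)/((m:ℝ)-1) := by
  induction S using Finset.strongInduction with
  | _ S ih =>
    intro m hm hS
    rcases S.eq_empty_or_nonempty with rfl | hne
    · simp only [Finset.prod_empty]
      have hm' : (2:ℝ) ≤ (m:ℝ) := by exact_mod_cast hm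
      rw [le_div_iff₀ (by linarith)]
      linarith
    · set k₀ := S.min' hne with hk₀
      have hk₀S : k₀ ∈ S := S.min'_mem hne
      have hmk₀ : m ≤ k₀ := hS k₀ hk₀S
      have hk₀2 : 2 ≤ k₀ := le_trans hm hmk₀
      have hk₀R : (2:ℝ) ≤ (k₀:ℝ) := by exact_mod_cast hk₀2
      have hmR : (2:ℝ) ≤ (m:ℝ) := by exact_mod_cast hm
      have hmk₀R : (m:ℝ) ≤ (k₀:ℝ) := by exact_mod_cast hmk₀
      have herase : S.erase k₀ ⊂ S := Finset.erase_ssubset hk₀S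
      have hrest : ∀ k ∈ S.erase k₀, k₀ + 1 ≤ k := by
        intro k hk
        have hkS : k ∈ S := Finset.mem_of_mem_erase hk
        have hne' : k ≠ k₀ := Finset.ne_of_mem_erase hk
        have := S.min'_le k hkS
        omega
      have IH := ih (S.erase k₀) herase (k₀+1) (by omega) hrest
      rw [← Finset.prod_erase_mul S _ hk₀S]
      have hpos : (0:ℝ) < (k₀:ℝ)^2 - 1 := by nlinarith
      have hfk : (0:ℝ) ≤ (k₀:ℝ)^2/((k₀:ℝ)^2-1) := by positivity
      have hprod_nonneg : (0:ℝ) ≤ ∏ k ∈ S.erase k₀, ((k:ℝ)^2/((k:ℝ)^2-1)) := by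
        apply Finset.prod_nonneg
        intro k hk
        have h2 : 2 ≤ k := by have := hrest k hk; omega
        have h2R : (2:ℝ) ≤ (k:ℝ) := by exact_mod_cast h2
        have : (0:ℝ) < (k:ℝ)^2 - 1 := by nlinarith
        positivity
      have hIHcast : ∏ k ∈ S.erase k₀, ((k:ℝ)^2/((k:ℝ)^2-1)) ≤ ((k₀:ℝ)+1)/(k₀:ℝ) := by
        have := IH
        push_cast at this ⊢
        convert this using 2 <;> push_cast <;> ring
      calc (∏ k ∈ S.erase k₀, ((k:ℝ)^2/((k:ℝ)^2-1))) * ((k₀:ℝ)^2/((k₀:ℝ)^2-1))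
          ≤ (((k₀:ℝ)+1)/(k₀:ℝ)) * ((k₀:ℝ)^2/((k₀:ℝ)^2-1)) := by
            apply mul_le_mul_of_nonneg_right hIHcast hfk
        _ = (k₀:ℝ)/((k₀:ℝ)-1) := by
            have h : (k₀:ℝ)^2 - 1 = ((k₀:ℝ)-1)*((k₀:ℝ)+1) := by ring
            rw [div_mul_div_comm, h, div_eq_div_iff (by nlinarith) (by linarith)]
            ring
        _ ≤ (m:ℝ)/((m:ℝ)-1) := by
            rw [div_le_div_iff₀ (by linarith) (by linarith)]
            nlinarith

lemma prime_prod_bound (P : Finset ℕ) (hP : ∀ p ∈ P, Nat.Prime p) :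
    ∏ p ∈ P, ((p:ℝ)^2/((p:ℝ)^2-1)) ≤ 1.7 := by
  classical
  have hfpos : ∀ p ∈ P, (0:ℝ) ≤ (p:ℝ)^2/((p:ℝ)^2-1) := by
    intro p hp
    have h2 : 2 ≤ p := (hP p hp).two_le
    have h2R : (2:ℝ) ≤ (p:ℝ) := by exact_mod_cast h2
    have : (0:ℝ) < (p:ℝ)^2 - 1 := by nlinarith
    positivity
  rw [← Finset.prod_filter_mul_prod_filter_not P (fun p => p < 31)]
  set PP : Finset ℕ := {2,3,5,7,11,13,17,19,23,29} with hPP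
  have hsub : P.filter (fun p => p < 31) ⊆ PP := by
    intro k hk
    rw [Finset.mem_filter] at hk
    have hkp : Nat.Prime k := hP k hk.1
    have hlt : k < 31 := hk.2
    have hall : ∀ k < 31, Nat.Prime k → k ∈ PP := by decide
    exact hall k hlt hkp
  have hone : ∀ i ∈ PP, (1:ℝ) ≤ (i:ℝ)^2/((i:ℝ)^2-1) := by
    intro i hi
    have h2 : 2 ≤ i := by fin_cases hi <;> norm_num
    have h2R : (2:ℝ) ≤ (i:ℝ) := by exact_mod_cast h2
    rw [le_div_iff₀ (by nlinarith)]
    nlinarith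
  have h1 : ∏ p ∈ P.filter (fun p => p < 31), ((p:ℝ)^2/((p:ℝ)^2-1))
      ≤ ∏ p ∈ PP, ((p:ℝ)^2/((p:ℝ)^2-1)) := by
    rw [← Finset.prod_sdiff hsub]
    have hge1 : (1:ℝ) ≤ ∏ p ∈ PP \ P.filter (fun p => p < 31), ((p:ℝ)^2/((p:ℝ)^2-1)) := by
      calc (1:ℝ) = ∏ _p ∈ PP \ P.filter (fun p => p < 31), (1:ℝ) := by rw [Finset.prod_const_one]
        _ ≤ _ := Finset.prod_le_prod (by intro i _; norm_num)
              (fun i hi => hone i (Finset.mem_sdiff.1 hi).1)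
    have hnn : (0:ℝ) ≤ ∏ p ∈ P.filter (fun p => p < 31), ((p:ℝ)^2/((p:ℝ)^2-1)) :=
      Finset.prod_nonneg (fun p hp => hfpos p (Finset.mem_filter.1 hp).1)
    nlinarith
  have h2 : ∏ p ∈ PP, ((p:ℝ)^2/((p:ℝ)^2-1)) = 
      (4/3)*(9/8)*(25/24)*(49/48)*(121/120)*(169/168)*(289/288)*(361/360)*(529/528)*(841/840) := by
    rw [hPP]
    norm_num [Finset.prod_insert, Finset.mem_insert]
  have h3 : ∏ p ∈ P.filter (fun p => ¬ p < 31), ((p:ℝ)^2/((p:ℝ)^2-1)) ≤ (31:ℝ)/30 := by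
    have := telescope_prod (P.filter (fun p => ¬ p < 31)) 31 (by norm_num)
      (by intro k hk; rw [Finset.mem_filter] at hk; omega)
    convert this using 1
    norm_num
  have hnn1 : (0:ℝ) ≤ ∏ p ∈ P.filter (fun p => p < 31), ((p:ℝ)^2/((p:ℝ)^2-1)) := 
    Finset.prod_nonneg (fun p hp => hfpos p (Finset.mem_filter.1 hp).1)
  have hnn2 : (0:ℝ) ≤ ∏ p ∈ P.filter (fun p => ¬ p < 31), ((p:ℝ)^2/((p:ℝ)^2-1)) := 
    Finset.prod_nonneg (fun p hp => hfpos p (Finset.mem_filter.1 hp).1)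
  calc (∏ p ∈ P.filter (fun p => p < 31), ((p:ℝ)^2/((p:ℝ)^2-1))) *
        ∏ p ∈ P.filter (fun p => ¬ p < 31), ((p:ℝ)^2/((p:ℝ)^2-1))
      ≤ ((4/3)*(9/8)*(25/24)*(49/48)*(121/120)*(169/168)*(289/288)*(361/360)*(529/528)*(841/840)) * ((31:ℝ)/30) := by
        apply mul_le_mul (h2 ▸ h1) h3 hnn2
        rw [← h2]
        exact Finset.prod_nonneg (fun p hp => by
          fin_cases hp <;> norm_num)
    _ ≤ 1.7 := by norm_num

-- totient of square of a product of distinct primes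
lemma totient_sq_prod (P : Finset ℕ) (hP : ∀ p ∈ P, Nat.Prime p) :
    Nat.totient ((∏ p ∈ P, p)^2) = ∏ p ∈ P, (p * (p-1)) := by
  classical
  induction P using Finset.induction_on with
  | empty => simp
  | @insert q S hq ih =>
    have hqp : Nat.Prime q := hP q (Finset.mem_insert_self q S)
    have hS : ∀ p ∈ S, Nat.Prime p := fun p hp => hP p (Finset.mem_insert_of_mem hp)
    have hcop : (Nat.Coprime q (∏ p ∈ S, p)) := by
      apply Nat.Coprime.prod_right
      intro p hp
      exact (Nat.coprime_primes hqp (hS p hp)).2 (fun h => hq (h ▸ hp))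
    rw [Finset.prod_insert hq, Finset.prod_insert hq, mul_pow,
      Nat.totient_mul (Nat.Coprime.pow 2 2 hcop), ih hS]
    congr 1
    rw [Nat.totient_prime_pow hqp (by norm_num)]
    norm_num

-- sum of divisors of a product of distinct primes
lemma sigma_prod (P : Finset ℕ) (hP : ∀ p ∈ P, Nat.Prime p) :
    ∑ d ∈ (∏ p ∈ P, p).divisors, d = ∏ p ∈ P, (p + 1) := by
  classical
  induction P using Finset.induction_on with
  | empty => simp
  | @insert q S hq ih =>
    have hqp : Nat.Prime q := hP q (Finset.mem_insert_self q S)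
    have hS : ∀ p ∈ S, Nat.Prime p := fun p hp => hP p (Finset.mem_insert_of_mem hp)
    have hcop : (Nat.Coprime q (∏ p ∈ S, p)) := by
      apply Nat.Coprime.prod_right
      intro p hp
      exact (Nat.coprime_primes hqp (hS p hp)).2 (fun h => hq (h ▸ hp))
    rw [Finset.prod_insert hq, Finset.prod_insert hq]
    have h1 : ∀ n : ℕ, ∑ d ∈ n.divisors, d = ArithmeticFunction.sigma 1 n := by
      intro n; rw [ArithmeticFunction.sigma_one_apply]
    rw [h1, ArithmeticFunction.isMultiplicative_sigma.map_mul_of_coprime hcop,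
      ← h1, ← h1, ih hS]
    congr 1
    rw [hqp.divisors, Finset.sum_pair hqp.one_lt.ne]
    omega

-- main per-term bound for squarefree a
lemma key_bound (a : ℕ) (ha : Squarefree a) :
    (1:ℝ)/(Nat.totient (a^2)) ≤ 1.7/(a:ℝ)^2 * ∑ d ∈ a.divisors, (1:ℝ)/d := by
  have ha0 : a ≠ 0 := ha.ne_zero
  have haR : (0:ℝ) < (a:ℝ) := by exact_mod_cast Nat.pos_of_ne_zero ha0
  set P := a.primeFactors with hPdef
  have hP : ∀ p ∈ P, Nat.Prime p := fun p hp => Nat.prime_of_mem_primeFactors hp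
  have hprod : ∏ p ∈ P, p = a := Nat.prod_primeFactors_of_squarefree ha
  -- totient of a^2
  have htot : Nat.totient (a^2) = ∏ p ∈ P, (p * (p-1)) := by
    rw [← hprod]; exact totient_sq_prod P hP
  -- sum of 1/d over divisors
  have hdiv : ∑ d ∈ a.divisors, (1:ℝ)/d = (∑ d ∈ a.divisors, (d:ℝ))/(a:ℝ) := by
    have h0 : ∑ d ∈ a.divisors, (1:ℝ)/((a/d : ℕ):ℝ) = ∑ d ∈ a.divisors, (1:ℝ)/d :=
      Nat.sum_div_divisors a (fun d => (1:ℝ)/d)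
    rw [← h0, Finset.sum_div]
    apply Finset.sum_congr rfl
    intro d hd
    have hdvd : d ∣ a := (Nat.mem_divisors.1 hd).1
    have hd0 : (0:ℝ) < (d:ℝ) := by exact_mod_cast Nat.pos_of_mem_divisors hd
    rw [Nat.cast_div hdvd hd0.ne']
    rw [one_div_div]
  have hsig : ∑ d ∈ a.divisors, (d:ℝ) = ∏ p ∈ P, ((p:ℝ) + 1) := by
    have := sigma_prod P hP
    rw [hprod] at this
    calc ∑ d ∈ a.divisors, (d:ℝ) = ((∑ d ∈ a.divisors, d : ℕ) : ℝ) := by push_cast; rfl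
      _ = ((∏ p ∈ P, (p+1) : ℕ) : ℝ) := by rw [this]
      _ = ∏ p ∈ P, ((p:ℝ) + 1) := by push_cast; rfl
  -- casts of totient product
  have htotR : ((Nat.totient (a^2) : ℕ) : ℝ) = ∏ p ∈ P, ((p:ℝ) * ((p:ℝ)-1)) := by
    rw [htot]
    push_cast [Nat.cast_prod]
    apply Finset.prod_congr rfl
    intro p hp
    have h1 : 1 ≤ p := (hP p hp).one_lt.le
    push_cast [Nat.cast_sub h1]
    ring
  have haP : (a:ℝ) = ∏ p ∈ P, (p:ℝ) := by
    rw [← hprod]; push_cast; rfl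
  -- positivity facts
  have hfac : ∀ p ∈ P, (0:ℝ) < ((p:ℝ)-1) ∧ (2:ℝ) ≤ (p:ℝ) := by
    intro p hp
    have := (hP p hp).two_le
    have : (2:ℝ) ≤ (p:ℝ) := by exact_mod_cast this
    constructor <;> linarith
  have htpos : (0:ℝ) < ∏ p ∈ P, ((p:ℝ) * ((p:ℝ)-1)) := by
    apply Finset.prod_pos
    intro p hp
    have := hfac p hp
    nlinarith
  have hkey : ∏ p ∈ P, ((p:ℝ)^2/((p:ℝ)^2-1)) ≤ 1.7 := prime_prod_bound P hP
  have hfactor : ∀ p ∈ P, (0:ℝ) < (p:ℝ)^2 - 1 := by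
    intro p hp; have := (hfac p hp).2; nlinarith
  have hprodfac : (0:ℝ) < ∏ p ∈ P, ((p:ℝ)^2-1) := Finset.prod_pos hfactor
  have hppos : (0:ℝ) < ∏ p ∈ P, (p:ℝ) :=
    Finset.prod_pos (fun p hp => by have := (hfac p hp).2; linarith)
  have hsplus : (0:ℝ) < ∏ p ∈ P, ((p:ℝ)+1) :=
    Finset.prod_pos (fun p hp => by have := (hfac p hp).2; linarith)
  rw [hdiv, hsig, htotR]
  rw [div_mul_div_comm, div_le_div_iff₀ htpos (by positivity)]
  have hsq : (a:ℝ)^2 = ∏ p ∈ P, ((p:ℝ)^2) := by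
    rw [haP, ← Finset.prod_pow]
  have hid : ∏ p ∈ P, ((p:ℝ)^2) = (∏ p ∈ P, ((p:ℝ)^2/((p:ℝ)^2-1))) * ∏ p ∈ P, ((p:ℝ)^2-1) := by
    rw [← Finset.prod_mul_distrib]
    apply Finset.prod_congr rfl
    intro p hp
    rw [div_mul_cancel₀ _ (hfactor p hp).ne']
  have hmul : (∏ p ∈ P, ((p:ℝ)+1)) * (∏ p ∈ P, ((p:ℝ)*((p:ℝ)-1))) = (∏ p ∈ P, (p:ℝ)) * ∏ p ∈ P, ((p:ℝ)^2-1) := by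
    rw [← Finset.prod_mul_distrib, ← Finset.prod_mul_distrib]
    apply Finset.prod_congr rfl
    intro p hp
    ring
  calc (1:ℝ) * ((a:ℝ)^2 * (a:ℝ))
      = (∏ p ∈ P, ((p:ℝ)^2)) * ∏ p ∈ P, (p:ℝ) := by rw [one_mul, hsq, haP]
    _ = ((∏ p ∈ P, ((p:ℝ)^2/((p:ℝ)^2-1))) * ∏ p ∈ P, ((p:ℝ)^2-1)) * ∏ p ∈ P, (p:ℝ) := by rw [← hid]
    _ ≤ (1.7 * ∏ p ∈ P, ((p:ℝ)^2-1)) * ∏ p ∈ P, (p:ℝ) := by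
        apply mul_le_mul_of_nonneg_right _ hppos.le
        exact mul_le_mul_of_nonneg_right hkey hprodfac.le
    _ = 1.7 * ((∏ p ∈ P, ((p:ℝ)+1)) * (∏ p ∈ P, ((p:ℝ)*((p:ℝ)-1)))) := by rw [hmul]; ring
    _ = 1.7 * (∏ p ∈ P, ((p:ℝ)+1)) * (∏ p ∈ P, ((p:ℝ)*((p:ℝ)-1))) := by ring

-- swap lemma in ENNReal
lemma swap_le (N : ℕ) (g : ℕ × ℕ → ENNReal) :
    ∑' (a : ℕ), (if N < a then ∑ p ∈ a.divisorsAntidiagonal, g p else 0) ≤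
      ∑' (p : ℕ × ℕ), (if N < p.1 * p.2 then g p else 0) := by
  classical
  set G : ℕ → ℕ × ℕ → ENNReal := fun a p => if p ∈ a.divisorsAntidiagonal ∧ N < a then g p else 0
    with hG
  have h1 : ∀ a : ℕ, (if N < a then ∑ p ∈ a.divisorsAntidiagonal, g p else 0) = ∑' p, G a p := by
    intro a
    by_cases ha : N < a
    · rw [if_pos ha, tsum_eq_sum (s := a.divisorsAntidiagonal)
        (f := G a) (fun p hp => by simp only [hG]; rw [if_neg]; tauto)]
      apply Finset.sum_congr rfl
      intro p hp
      simp only [hG]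
      rw [if_pos ⟨hp, ha⟩]
    · rw [if_neg ha]
      have : ∀ p, G a p = 0 := by
        intro p; simp only [hG]; rw [if_neg]; tauto
      simp [this]
  calc ∑' (a : ℕ), (if N < a then ∑ p ∈ a.divisorsAntidiagonal, g p else 0)
      = ∑' (a : ℕ) (p : ℕ × ℕ), G a p := by exact tsum_congr h1
    _ = ∑' (p : ℕ × ℕ) (a : ℕ), G a p := ENNReal.tsum_comm
    _ ≤ ∑' (p : ℕ × ℕ), (if N < p.1 * p.2 then g p else 0) := by
        apply ENNReal.tsum_le_tsum
        intro p
        have hsingle : ∑' (a : ℕ), G a p = G (p.1 * p.2) p := by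
          apply tsum_eq_single
          intro a ha
          simp only [hG]
          rw [if_neg]
          intro ⟨hmem, _⟩
          exact ha ((Nat.mem_divisorsAntidiagonal.1 hmem).1.symm)
        rw [hsingle]
        simp only [hG]
        split_ifs with h1' h2'
        · exact le_rfl
        · exact absurd h1'.2 (by rw [← (Nat.mem_divisorsAntidiagonal.1 h1'.1).1] at h2'; exact h2')
        · exact zero_le
        · exact le_rfl


noncomputable def Breal (N d : ℕ) : ℝ :=
  if d = 0 then 0 else if d ≤ N then 1.7*(1/(N*(d:ℝ)^2) + 1/((N:ℝ)^2*d)) else (1.7*1.65)/(d:ℝ)^3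

lemma Breal_nonneg (N d : ℕ) : 0 ≤ Breal N d := by
  unfold Breal
  split_ifs <;> positivity

lemma summable_ite_invsq (k : ℕ) : Summable (fun m : ℕ => if k ≤ m then (1:ℝ)/(m:ℝ)^2 else 0) := by
  apply Summable.of_nonneg_of_le (f := fun m : ℕ => (1:ℝ)/(m:ℝ)^2)
  · intro b; split
    · positivity
    · exact le_rfl
  · intro b; split
    · exact le_rfl
    · positivity
  · exact summable_invsq

lemma inner_bound_s9 (N d : ℕ) (hN : 8 ≤ N) :
    ∑' (m : ℕ), (if N < d * m then ENNReal.ofReal (1.7/((d:ℝ)^3*(m:ℝ)^2)) else 0)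
      ≤ ENNReal.ofReal (Breal N d) := by
  rcases Nat.eq_zero_or_pos d with rfl | hd
  · simp
  have hdR : (1:ℝ) ≤ (d:ℝ) := by exact_mod_cast hd
  have hNR : (8:ℝ) ≤ (N:ℝ) := by exact_mod_cast hN
  set k := N / d + 1 with hk
  have hk1 : 1 ≤ k := Nat.le_add_left 1 (N/d)
  have hcond : ∀ m : ℕ, (N < d * m) ↔ (k ≤ m) := by
    intro m
    rw [hk, Nat.add_one_le_iff, Nat.div_lt_iff_lt_mul hd, mul_comm]
  have hsplit : ∀ m : ℕ, (if N < d * m then ENNReal.ofReal (1.7/((d:ℝ)^3*(m:ℝ)^2)) else 0)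
      = ENNReal.ofReal (1.7/(d:ℝ)^3) * ENNReal.ofReal (if k ≤ m then (1:ℝ)/(m:ℝ)^2 else 0) := by
    intro m
    rw [if_congr (hcond m) rfl rfl]
    split_ifs with h
    · rw [← ENNReal.ofReal_mul (by positivity)]
      congr 1
      field_simp
    · simp
  calc ∑' (m : ℕ), (if N < d * m then ENNReal.ofReal (1.7/((d:ℝ)^3*(m:ℝ)^2)) else 0)
      = ENNReal.ofReal (1.7/(d:ℝ)^3) *
          ∑' (m : ℕ), ENNReal.ofReal (if k ≤ m then (1:ℝ)/(m:ℝ)^2 else 0) := by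
        rw [← ENNReal.tsum_mul_left]
        exact tsum_congr hsplit
    _ = ENNReal.ofReal (1.7/(d:ℝ)^3) *
          ENNReal.ofReal (∑' (m : ℕ), (if k ≤ m then (1:ℝ)/(m:ℝ)^2 else 0)) := by
        rw [ENNReal.ofReal_tsum_of_nonneg]
        · intro m; split
          · positivity
          · exact le_rfl
        · exact summable_ite_invsq k
    _ ≤ ENNReal.ofReal (Breal N d) := by
        rw [← ENNReal.ofReal_mul (by positivity)]
        apply ENNReal.ofReal_le_ofReal
        by_cases hdN : d ≤ N
        · -- small d case
          have hdNR : (d:ℝ) ≤ (N:ℝ) := by exact_mod_cast hdN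
          have htail : ∑' (m : ℕ), (if k ≤ m then (1:ℝ)/(m:ℝ)^2 else 0) ≤ 1/((k:ℝ)-1/2) :=
            tailsq_ite k hk1
          have hNdk : (N:ℝ) < (d:ℝ) * (k:ℝ) := by
            have : N < d * k := by
              rw [hk, Nat.mul_add, mul_one]
              have h1 := Nat.div_add_mod N d
              have h2 := Nat.mod_lt N hd
              omega
            exact_mod_cast this
          have hkhalf : (0:ℝ) < (k:ℝ) - 1/2 := by
            have : (1:ℝ) ≤ (k:ℝ) := by exact_mod_cast hk1
            linarith
          have h2 : 1/((k:ℝ)-1/2) ≤ 2*(d:ℝ)/(2*(N:ℝ)-(d:ℝ)) := by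
            rw [div_le_div_iff₀ hkhalf (by linarith)]
            nlinarith
          have h3 : 2*(d:ℝ)/(2*(N:ℝ)-(d:ℝ)) ≤ (d:ℝ)/(N:ℝ) + (d:ℝ)^2/(N:ℝ)^2 := by
            rw [div_add_div _ _ (by linarith) (by nlinarith),
              div_le_div_iff₀ (by linarith) (by nlinarith)]
            nlinarith [mul_nonneg (mul_nonneg (by positivity : (0:ℝ) ≤ (N:ℝ))
              (sq_nonneg (d:ℝ))) (sub_nonneg.2 hdNR)]
          have hB : Breal N d = 1.7*(1/(N*(d:ℝ)^2) + 1/((N:ℝ)^2*d)) := by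
            unfold Breal
            rw [if_neg (by omega), if_pos hdN]
          rw [hB]
          have hid : 1.7/(d:ℝ)^3 * ((d:ℝ)/(N:ℝ) + (d:ℝ)^2/(N:ℝ)^2)
              = 1.7*(1/(N*(d:ℝ)^2) + 1/((N:ℝ)^2*d)) := by
            field_simp
          calc 1.7/(d:ℝ)^3 * (∑' (m : ℕ), (if k ≤ m then (1:ℝ)/(m:ℝ)^2 else 0))
              ≤ 1.7/(d:ℝ)^3 * ((d:ℝ)/(N:ℝ) + (d:ℝ)^2/(N:ℝ)^2) := by
                apply mul_le_mul_of_nonneg_left _ (by positivity)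
                exact le_trans htail (le_trans h2 h3)
            _ = 1.7*(1/(N*(d:ℝ)^2) + 1/((N:ℝ)^2*d)) := hid
        · -- large d case
          have hk1' : k = 1 := by
            rw [hk, Nat.div_eq_of_lt (by omega)]
          have heq : ∀ m : ℕ, (if k ≤ m then (1:ℝ)/(m:ℝ)^2 else 0) = (1:ℝ)/(m:ℝ)^2 := by
            intro m
            rcases Nat.eq_zero_or_pos m with rfl | hm
            · simp
            · rw [if_pos (by omega)]
          have htail : ∑' (m : ℕ), (if k ≤ m then (1:ℝ)/(m:ℝ)^2 else 0) ≤ 1.65 := by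
            rw [tsum_congr heq]
            exact zeta2_le
          have hB : Breal N d = (1.7*1.65)/(d:ℝ)^3 := by
            unfold Breal
            rw [if_neg (by omega), if_neg hdN]
          rw [hB]
          have hnn0 : ∀ m : ℕ, 0 ≤ (if k ≤ m then (1:ℝ)/(m:ℝ)^2 else 0) := by
            intro m; split
            · positivity
            · exact le_rfl
          have hnn : 0 ≤ ∑' (m : ℕ), (if k ≤ m then (1:ℝ)/(m:ℝ)^2 else 0) :=
            tsum_nonneg hnn0
          calc 1.7/(d:ℝ)^3 * (∑' (m : ℕ), (if k ≤ m then (1:ℝ)/(m:ℝ)^2 else 0))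
              ≤ 1.7/(d:ℝ)^3 * 1.65 := by
                apply mul_le_mul_of_nonneg_left htail (by positivity)
            _ = (1.7*1.65)/(d:ℝ)^3 := by ring

lemma summable_Breal (N : ℕ) (hN : 8 ≤ N) : Summable (fun d : ℕ => Breal N d) := by
  apply Summable.of_nonneg_of_le (f := fun d : ℕ => 6*((1:ℝ)/(d:ℝ)^2))
  · intro b; exact Breal_nonneg N b
  · intro d
    unfold Breal
    have hNR : (8:ℝ) ≤ (N:ℝ) := by exact_mod_cast hN
    split_ifs with h0 hdN
    · subst h0; simp
    · have hd1 : (1:ℝ) ≤ (d:ℝ) := by exact_mod_cast Nat.one_le_iff_ne_zero.2 h0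
      have hdN' : (d:ℝ) ≤ (N:ℝ) := by exact_mod_cast hdN
      have e1 : 1/((N:ℝ)*(d:ℝ)^2) ≤ 1/(d:ℝ)^2 := by
        rw [div_le_div_iff₀ (by positivity) (by positivity)]
        nlinarith
      have e2 : 1/((N:ℝ)^2*(d:ℝ)) ≤ 1/(d:ℝ)^2 := by
        rw [div_le_div_iff₀ (by positivity) (by positivity)]
        nlinarith
      have e3 : (0:ℝ) ≤ 1/(d:ℝ)^2 := by positivity
      linarith
    · have hd1 : (1:ℝ) ≤ (d:ℝ) := by exact_mod_cast Nat.one_le_iff_ne_zero.2 h0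
      have e1 : (1.7*1.65)/(d:ℝ)^3 ≤ 3/(d:ℝ)^2 := by
        rw [div_le_div_iff₀ (by positivity) (by positivity)]
        nlinarith
      have e2 : (0:ℝ) < (d:ℝ)^2 := by positivity
      calc (1.7*1.65)/(d:ℝ)^3 ≤ 3/(d:ℝ)^2 := e1
        _ ≤ 6*(1/(d:ℝ)^2) := by
            rw [mul_one_div]
            gcongr
            norm_num
  · exact (summable_invsq.mul_left 6)

lemma harmonic_sum_le (N : ℕ) (hN : 1 ≤ N) :
    ∑ d ∈ Finset.range (N+1), (1:ℝ)/(d:ℝ) ≤ 1 + Real.log N := by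
  have h1 : ∑ d ∈ Finset.range (N+1), (1:ℝ)/(d:ℝ) = ∑ i ∈ Finset.range N, (1:ℝ)/((i:ℝ)+1) := by
    rw [Finset.sum_range_succ']
    simp
  have h2 : ((harmonic N : ℚ) : ℝ) = ∑ i ∈ Finset.range N, (1:ℝ)/((i:ℝ)+1) := by
    rw [harmonic]
    push_cast
    apply Finset.sum_congr rfl
    intros i _
    rw [one_div]
  rw [h1, ← h2]
  exact harmonic_le_one_add_log N

lemma Breal_sum_le (N : ℕ) (hN : 8 ≤ N) :
    ∑' (d : ℕ), Breal N d ≤ 1.7*(1.65/(N:ℝ) + (1+Real.log N)/(N:ℝ)^2 + 1.65/(2*(N:ℝ)^2)) := by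
  have hNR : (8:ℝ) ≤ (N:ℝ) := by exact_mod_cast hN
  have hsum := summable_Breal N hN
  rw [← Summable.sum_add_tsum_nat_add (N+1) hsum]
  have hhead : ∑ d ∈ Finset.range (N+1), Breal N d
      ≤ 1.7*(1.65/(N:ℝ)) + 1.7*((1+Real.log N)/(N:ℝ)^2) := by
    have hterm : ∀ d ∈ Finset.range (N+1),
        Breal N d ≤ 1.7/(N:ℝ)*((1:ℝ)/(d:ℝ)^2) + 1.7/(N:ℝ)^2*((1:ℝ)/(d:ℝ)) := by
      intro d hd
      have hdN : d ≤ N := Nat.lt_succ_iff.1 (Finset.mem_range.1 hd)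
      unfold Breal
      by_cases h0 : d = 0
      · subst h0; simp
      · rw [if_neg h0, if_pos hdN]
        have hd1 : (1:ℝ) ≤ (d:ℝ) := by exact_mod_cast Nat.one_le_iff_ne_zero.2 h0
        have hN1 : (0:ℝ) < (N:ℝ) := by linarith
        have heq : 1.7*(1/((N:ℝ)*(d:ℝ)^2) + 1/((N:ℝ)^2*(d:ℝ)))
            = 1.7/(N:ℝ)*((1:ℝ)/(d:ℝ)^2) + 1.7/(N:ℝ)^2*((1:ℝ)/(d:ℝ)) := by
          field_simp
        exact le_of_eq heq
    calc ∑ d ∈ Finset.range (N+1), Breal N d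
        ≤ ∑ d ∈ Finset.range (N+1), (1.7/(N:ℝ)*((1:ℝ)/(d:ℝ)^2) + 1.7/(N:ℝ)^2*((1:ℝ)/(d:ℝ))) :=
          Finset.sum_le_sum hterm
      _ = 1.7/(N:ℝ)*(∑ d ∈ Finset.range (N+1), (1:ℝ)/(d:ℝ)^2)
          + 1.7/(N:ℝ)^2*(∑ d ∈ Finset.range (N+1), (1:ℝ)/(d:ℝ)) := by
          rw [Finset.sum_add_distrib, Finset.mul_sum, Finset.mul_sum]
      _ ≤ 1.7/(N:ℝ)*1.65 + 1.7/(N:ℝ)^2*(1+Real.log N) := by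
          have hsq : ∑ d ∈ Finset.range (N+1), (1:ℝ)/(d:ℝ)^2 ≤ 1.65 := by
            refine le_trans (Summable.sum_le_tsum _ (fun i _ => by positivity) summable_invsq) zeta2_le
          have hha : ∑ d ∈ Finset.range (N+1), (1:ℝ)/(d:ℝ) ≤ 1+Real.log N :=
            harmonic_sum_le N (by omega)
          have hp1 : (0:ℝ) ≤ 1.7/(N:ℝ) := by positivity
          have hp2 : (0:ℝ) ≤ 1.7/(N:ℝ)^2 := by positivity
          have hnn2 : (0:ℝ) ≤ ∑ d ∈ Finset.range (N+1), (1:ℝ)/(d:ℝ) :=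
            Finset.sum_nonneg (fun i _ => by positivity)
          nlinarith
      _ = 1.7*(1.65/(N:ℝ)) + 1.7*((1+Real.log N)/(N:ℝ)^2) := by ring
  have htail : ∑' (i : ℕ), Breal N (i + (N+1)) ≤ 1.7*(1.65/(2*(N:ℝ)^2)) := by
    have hterm : ∀ i : ℕ, Breal N (i + (N+1)) = (1.7*1.65)*((1:ℝ)/((i:ℝ)+((N:ℕ)+1:ℕ))^3) := by
      intro i
      unfold Breal
      rw [if_neg (by omega), if_neg (by omega)]
      have : ((i + (N+1) : ℕ):ℝ) = (i:ℝ)+((N:ℕ)+1:ℕ) := by push_cast; ring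
      rw [this, mul_one_div]
    rw [tsum_congr hterm, tsum_mul_left]
    have h2 := tailcube (N+1) (by omega)
    have hcast : ((N+1:ℕ):ℝ) - 1 = (N:ℝ) := by push_cast; ring
    rw [hcast] at h2
    calc 1.7*1.65 * ∑' (i : ℕ), (1:ℝ)/((i:ℝ)+((N+1:ℕ):ℝ))^3
        ≤ 1.7*1.65 * (1/(2*(N:ℝ)^2)) := by
          apply mul_le_mul_of_nonneg_left h2 (by norm_num)
      _ = 1.7*(1.65/(2*(N:ℝ)^2)) := by ring
  calc ∑ d ∈ Finset.range (N+1), Breal N d + ∑' (i : ℕ), Breal N (i + (N+1))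
      ≤ (1.7*(1.65/(N:ℝ)) + 1.7*((1+Real.log N)/(N:ℝ)^2)) + 1.7*(1.65/(2*(N:ℝ)^2)) := by
        exact add_le_add hhead htail
    _ = 1.7*(1.65/(N:ℝ) + (1+Real.log N)/(N:ℝ)^2 + 1.65/(2*(N:ℝ)^2)) := by ring

lemma pair_sum_bound (N : ℕ) (hN : 8 ≤ N) :
    ∑' (p : ℕ × ℕ), (if N < p.1 * p.2 then ENNReal.ofReal (1.7/((p.1:ℝ)^3*(p.2:ℝ)^2)) else 0)
      ≤ ENNReal.ofReal (1.7*(1.65/(N:ℝ) + (1+Real.log N)/(N:ℝ)^2 + 1.65/(2*(N:ℝ)^2))) := by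
  have h1 : ∑' (p : ℕ × ℕ), (if N < p.1 * p.2 then ENNReal.ofReal (1.7/((p.1:ℝ)^3*(p.2:ℝ)^2)) else 0)
      = ∑' (d : ℕ) (m : ℕ), (if N < d * m then ENNReal.ofReal (1.7/((d:ℝ)^3*(m:ℝ)^2)) else 0) :=
    ENNReal.tsum_prod (f := fun d m => if N < d * m then ENNReal.ofReal (1.7/((d:ℝ)^3*(m:ℝ)^2)) else 0)
  rw [h1]
  calc ∑' (d : ℕ) (m : ℕ), (if N < d * m then ENNReal.ofReal (1.7/((d:ℝ)^3*(m:ℝ)^2)) else 0)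
      ≤ ∑' (d : ℕ), ENNReal.ofReal (Breal N d) :=
        ENNReal.tsum_le_tsum (fun d => inner_bound_s9 N d hN)
    _ = ENNReal.ofReal (∑' (d : ℕ), Breal N d) :=
        (ENNReal.ofReal_tsum_of_nonneg (Breal_nonneg N) (summable_Breal N hN)).symm
    _ ≤ _ := ENNReal.ofReal_le_ofReal (Breal_sum_le N hN)


-- per-term bound
lemma term_le (a : ℕ) (ha : 1 ≤ a) :
    ENNReal.ofReal (((moebius a : ℤ):ℝ)^2 / (Nat.totient (a^2))) ≤
      ∑ p ∈ a.divisorsAntidiagonal, ENNReal.ofReal (1.7/((p.1:ℝ)^3*(p.2:ℝ)^2)) := by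
  by_cases hsq : Squarefree a
  · have hmu : ((moebius a : ℤ):ℝ)^2 = 1 := by
      rw [moebius_apply_of_squarefree hsq]
      push_cast
      rw [← pow_mul, mul_comm, pow_mul]
      norm_num
    rw [hmu]
    have ha0 : a ≠ 0 := by omega
    have haR : (0:ℝ) < (a:ℝ) := by exact_mod_cast Nat.pos_of_ne_zero ha0
    -- rewrite antidiagonal sum as divisors sum
    have hanti : ∑ p ∈ a.divisorsAntidiagonal, ENNReal.ofReal (1.7/((p.1:ℝ)^3*(p.2:ℝ)^2))
        = ∑ d ∈ a.divisors, ENNReal.ofReal (1.7/((a:ℝ)^2*(d:ℝ))) := by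
      rw [Nat.sum_divisorsAntidiagonal (fun d m => ENNReal.ofReal (1.7/((d:ℝ)^3*(m:ℝ)^2)))]
      apply Finset.sum_congr rfl
      intro d hd
      have hdvd : d ∣ a := (Nat.mem_divisors.1 hd).1
      have hd0 : (0:ℝ) < (d:ℝ) := by exact_mod_cast Nat.pos_of_mem_divisors hd
      congr 1
      rw [Nat.cast_div hdvd hd0.ne']
      field_simp
    rw [hanti]
    have hsum : (1:ℝ) / (Nat.totient (a^2)) ≤ ∑ d ∈ a.divisors, 1.7/((a:ℝ)^2*(d:ℝ)) := by
      refine le_trans (key_bound a hsq) (le_of_eq ?_)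
      rw [Finset.mul_sum]
      apply Finset.sum_congr rfl
      intro d _
      rw [div_mul_div_comm]
      norm_num
    calc ENNReal.ofReal ((1:ℝ)/(Nat.totient (a^2)))
        ≤ ENNReal.ofReal (∑ d ∈ a.divisors, 1.7/((a:ℝ)^2*(d:ℝ))) := ENNReal.ofReal_le_ofReal hsum
      _ = ∑ d ∈ a.divisors, ENNReal.ofReal (1.7/((a:ℝ)^2*(d:ℝ))) := by
          apply ENNReal.ofReal_sum_of_nonneg
          intro d _
          positivity
  · rw [moebius_eq_zero_of_not_squarefree hsq]
    simp

-- numeric facts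
lemma exp_half_ge : (1.64:ℝ) ≤ Real.exp (1/2) := by
  have h1 : Real.exp (1/2) * Real.exp (1/2) = Real.exp 1 := by
    rw [← Real.exp_add]; norm_num
  have h2 : (2.7182818283:ℝ) < Real.exp 1 := Real.exp_one_gt_d9
  have h3 : (0:ℝ) < Real.exp (1/2) := Real.exp_pos _
  nlinarith

lemma log8_lt : Real.log 8 < 2.0794416 := by
  have : (8:ℝ) = 2^3 := by norm_num
  rw [this, Real.log_pow]
  have := Real.log_two_lt_d9
  push_cast
  nlinarith

lemma log8_ge_two : (2:ℝ) ≤ Real.log 8 := by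
  rw [Real.le_log_iff_exp_le (by norm_num)]
  have h1 : Real.exp 2 = Real.exp 1 * Real.exp 1 := by rw [← Real.exp_add]; norm_num
  have h2 := Real.exp_one_lt_d9
  nlinarith [Real.exp_pos 1]

lemma final_numeric (N : ℕ) (hN : 8 ≤ N) :
    1.7*(1.65/(N:ℝ) + (1+Real.log N)/(N:ℝ)^2 + 1.65/(2*(N:ℝ)^2))
      ≤ (3 + Real.exp Real.eulerMascheroniConstant * Real.log (Real.log N))/(N:ℝ) := by
  have hn : (8:ℝ) ≤ (N:ℝ) := by exact_mod_cast hN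
  have hn0 : (0:ℝ) < (N:ℝ) := by linarith
  -- log N / N ≤ log 8 / 8
  have hld : Real.log (N:ℝ) / (N:ℝ) ≤ Real.log 8 / 8 := by
    have he8 : Real.exp 1 ≤ 8 := by
      have := Real.exp_one_lt_d9; linarith
    exact Real.log_div_self_antitoneOn (by simp only [Set.mem_Ici]; linarith)
      (by simp only [Set.mem_Ici]; linarith) hn
  have hlogN : Real.log (N:ℝ) ≤ 0.26 * (N:ℝ) := by
    have := log8_lt
    rw [div_le_div_iff₀ hn0 (by norm_num)] at hld
    nlinarith
  have hlogN2 : (2:ℝ) ≤ Real.log (N:ℝ) := le_trans log8_ge_two (Real.log_le_log (by norm_num) hn)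
  have hLL : (0.6931471:ℝ) ≤ Real.log (Real.log (N:ℝ)) := by
    have h1 : Real.log 2 ≤ Real.log (Real.log (N:ℝ)) := Real.log_le_log (by norm_num) hlogN2
    have := Real.log_two_gt_d9
    linarith
  have hE : (1.64:ℝ) ≤ Real.exp Real.eulerMascheroniConstant := by
    refine le_trans exp_half_ge (Real.exp_le_exp.2 ?_)
    exact (Real.one_half_lt_eulerMascheroniConstant).le
  have hEL : (1.64*0.6931471:ℝ) ≤ Real.exp Real.eulerMascheroniConstant * Real.log (Real.log (N:ℝ)) := by
    apply mul_le_mul hE hLL (by norm_num) (by positivity)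
  rw [le_div_iff₀ hn0]
  have hexp : 1.7*(1.65/(N:ℝ) + (1+Real.log N)/(N:ℝ)^2 + 1.65/(2*(N:ℝ)^2)) * (N:ℝ)
      = 1.7*1.65 + 1.7*(1+Real.log N)/(N:ℝ) + 1.7*1.65/(2*(N:ℝ)) := by
    field_simp
  rw [hexp]
  have h1 : 1.7*(1+Real.log N)/(N:ℝ) ≤ 1.7/8 + 1.7*0.26 := by
    rw [div_le_iff₀ hn0]
    nlinarith
  have h2 : 1.7*1.65/(2*(N:ℝ)) ≤ 1.7*1.65/16 := by
    apply div_le_div_of_nonneg_left (by norm_num) (by norm_num) (by linarith)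
  nlinarith

lemma f_measurable : Measurable (fun t : ℝ =>
    Real.exp Real.eulerMascheroniConstant * Real.log (Real.log t) / t ^ 2 + 3 / t ^ 2) := by
  apply Measurable.add
  · exact (measurable_const.mul (Real.measurable_log.comp Real.measurable_log)).div
      (measurable_id.pow_const 2)
  · exact measurable_const.div (measurable_id.pow_const 2)

lemma f_integrable (n : ℝ) (hn : 8 ≤ n) :
    IntegrableOn (fun t : ℝ =>
      Real.exp Real.eulerMascheroniConstant * Real.log (Real.log t) / t ^ 2 + 3 / t ^ 2)
      (Set.Ioi n) := by
  set E := Real.exp Real.eulerMascheroniConstant with hE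
  have hEpos : (0:ℝ) < E := Real.exp_pos _
  have hdom : IntegrableOn (fun t : ℝ => (2*E+3) * t ^ (-3/2 : ℝ)) (Set.Ioi n) := by
    exact (integrableOn_Ioi_rpow_of_lt (by norm_num) (by linarith : (0:ℝ) < n)).const_mul _
  apply hdom.mono' (f_measurable.aestronglyMeasurable.restrict)
  rw [ae_restrict_iff' measurableSet_Ioi]
  apply ae_of_all
  intro t ht
  have ht8 : (8:ℝ) < t := lt_of_le_of_lt hn ht
  have ht0 : (0:ℝ) < t := by linarith
  have hlt2 : (2:ℝ) ≤ Real.log t := by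
    rw [Real.le_log_iff_exp_le ht0]
    have h1 : Real.exp 2 = Real.exp 1 * Real.exp 1 := by rw [← Real.exp_add]; norm_num
    have h2 := Real.exp_one_lt_d9
    nlinarith [Real.exp_pos 1]
  have hll0 : (0:ℝ) ≤ Real.log (Real.log t) := by
    apply Real.log_nonneg; linarith
  have hfnn : (0:ℝ) ≤ E * Real.log (Real.log t) / t ^ 2 + 3 / t ^ 2 := by positivity
  rw [Real.norm_eq_abs, abs_of_nonneg hfnn]
  -- log log t ≤ log t ≤ 2 sqrt t
  have h1 : Real.log (Real.log t) ≤ Real.log t := Real.log_le_self (by linarith)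
  have h2 : Real.log t ≤ 2 * Real.sqrt t := by
    have hs : Real.log (Real.sqrt t) = Real.log t / 2 := Real.log_sqrt ht0.le
    have hs2 : Real.log (Real.sqrt t) ≤ Real.sqrt t - 1 :=
      Real.log_le_sub_one_of_pos (Real.sqrt_pos.2 ht0)
    have hs3 : Real.sqrt t ≥ 0 := Real.sqrt_nonneg t
    nlinarith
  have hrpow : t ^ (-3/2 : ℝ) = Real.sqrt t / t^2 := by
    rw [Real.sqrt_eq_rpow, eq_div_iff (by positivity), ← Real.rpow_natCast t 2,
      ← Real.rpow_add ht0]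
    norm_num
  rw [hrpow]
  have hsq1 : (1:ℝ) ≤ Real.sqrt t := by
    rw [show (1:ℝ) = Real.sqrt 1 by simp]
    exact Real.sqrt_le_sqrt (by linarith)
  have e1 : E * Real.log (Real.log t) / t ^ 2 ≤ E * (2*Real.sqrt t) / t^2 := by
    apply div_le_div_of_nonneg_right _ (by positivity)
    nlinarith
  have e2 : 3 / t^2 ≤ 3 * Real.sqrt t / t^2 := by
    apply div_le_div_of_nonneg_right _ (by positivity)
    nlinarith
  calc E * Real.log (Real.log t) / t ^ 2 + 3 / t ^ 2
      ≤ E * (2*Real.sqrt t) / t^2 + 3 * Real.sqrt t / t^2 := add_le_add e1 e2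
    _ = (2*E+3) * (Real.sqrt t / t^2) := by ring

lemma integral_side (N : ℕ) (hN : 8 ≤ N) :
    (3 + Real.exp Real.eulerMascheroniConstant * Real.log (Real.log (N:ℝ)))/(N:ℝ)
      ≤ ∫ t in Set.Ioi ((N:ℝ)),
        (Real.exp Real.eulerMascheroniConstant * Real.log (Real.log t) / t ^ 2 + 3 / t ^ 2) := by
  set E := Real.exp Real.eulerMascheroniConstant with hE
  have hEpos : (0:ℝ) < E := Real.exp_pos _
  have hn : (8:ℝ) ≤ (N:ℝ) := by exact_mod_cast hN
  have hn0 : (0:ℝ) < (N:ℝ) := by linarith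
  have hlogN2 : (2:ℝ) ≤ Real.log (N:ℝ) := by
    rw [Real.le_log_iff_exp_le hn0]
    have h1 : Real.exp 2 = Real.exp 1 * Real.exp 1 := by rw [← Real.exp_add]; norm_num
    have h2 := Real.exp_one_lt_d9
    nlinarith [Real.exp_pos 1]
  have hLL0 : (0:ℝ) ≤ Real.log (Real.log (N:ℝ)) := Real.log_nonneg (by linarith)
  set C := 3 + E * Real.log (Real.log (N:ℝ)) with hC
  have hC0 : (0:ℝ) ≤ C := by positivity
  -- integrability of constant/t^2
  have hint_rpow : IntegrableOn (fun t : ℝ => t ^ (-2 : ℝ)) (Set.Ioi (N:ℝ)) :=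
    integrableOn_Ioi_rpow_of_lt (by norm_num) hn0
  have heq : Set.EqOn (fun t : ℝ => C * t ^ (-2:ℝ)) (fun t : ℝ => C / t^2) (Set.Ioi (N:ℝ)) := by
    intro t ht
    have ht0 : (0:ℝ) < t := lt_trans hn0 ht
    simp only
    rw [Real.rpow_neg ht0.le, ← Real.rpow_natCast t 2]
    norm_num
    rw [div_eq_mul_inv]
  have hint_g : IntegrableOn (fun t : ℝ => C / t^2) (Set.Ioi (N:ℝ)) :=
    MeasureTheory.IntegrableOn.congr_fun (hint_rpow.const_mul C) heq measurableSet_Ioi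
  -- value of the integral
  have hval : ∫ t in Set.Ioi ((N:ℝ)), C / t^2 = C / (N:ℝ) := by
    rw [← setIntegral_congr_fun measurableSet_Ioi heq]
    rw [MeasureTheory.integral_const_mul]
    rw [integral_Ioi_rpow_of_lt (by norm_num) hn0]
    rw [show (-2:ℝ)+1 = -1 by norm_num, Real.rpow_neg_one]
    field_simp
  -- pointwise inequality
  have hptwise : ∀ t ∈ Set.Ioi ((N:ℝ)), C / t^2 ≤
      E * Real.log (Real.log t) / t ^ 2 + 3 / t ^ 2 := by
    intro t ht
    have htN : (N:ℝ) < t := ht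
    have ht0 : (0:ℝ) < t := lt_trans hn0 htN
    have hmono : Real.log (Real.log (N:ℝ)) ≤ Real.log (Real.log t) := by
      apply Real.log_le_log (by linarith)
      exact Real.log_le_log hn0 htN.le
    have : C ≤ 3 + E * Real.log (Real.log t) := by
      rw [hC]
      nlinarith
    calc C / t^2 ≤ (3 + E * Real.log (Real.log t)) / t^2 := by
          apply div_le_div_of_nonneg_right this (by positivity)
      _ = E * Real.log (Real.log t) / t ^ 2 + 3 / t ^ 2 := by ring
  rw [← hval]
  exact setIntegral_mono_on hint_g (f_integrable (N:ℝ) hn) measurableSet_Ioi hptwise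

open ArithmeticFunction Real in
theorem moebius_totient_tail_sum_le_integral (x : ℝ) (hx : 8 ≤ x) :
    ∑' a : {a : ℕ // x < (a : ℝ)}, ((moebius a : ℝ)) ^ 2 / (Nat.totient ((a : ℕ) ^ 2)) ≤
      ∫ t in Set.Ioi ((⌊x⌋₊ : ℝ)),
        (Real.exp eulerMascheroniConstant * Real.log (Real.log t) / t ^ 2 + 3 / t ^ 2) := by
  classical
  set N := ⌊x⌋₊ with hNdef
  have hN8 : 8 ≤ N := Nat.le_floor (by exact_mod_cast hx)
  have hx0 : (0:ℝ) ≤ x := by linarith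
  set f : ℕ → ℝ := fun a => ((moebius a : ℝ))^2 / (Nat.totient (a^2)) with hf
  have hfnn : ∀ a, 0 ≤ f a := by
    intro a
    rw [hf]
    positivity
  set s : Set ℕ := {a : ℕ | x < (a:ℝ)} with hs
  -- integral is nonneg
  have hIntNonneg : 0 ≤ ∫ t in Set.Ioi ((N:ℝ)),
      (Real.exp eulerMascheroniConstant * Real.log (Real.log t) / t ^ 2 + 3 / t ^ 2) := by
    apply MeasureTheory.setIntegral_nonneg measurableSet_Ioi
    intro t ht
    have hn : (8:ℝ) ≤ (N:ℝ) := by exact_mod_cast hN8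
    have ht8 : (8:ℝ) < t := lt_of_le_of_lt hn ht
    have ht0 : (0:ℝ) < t := by linarith
    have hlt2 : (2:ℝ) ≤ Real.log t := by
      rw [Real.le_log_iff_exp_le ht0]
      have h1 : Real.exp 2 = Real.exp 1 * Real.exp 1 := by rw [← Real.exp_add]; norm_num
      have h2 := Real.exp_one_lt_d9
      nlinarith [Real.exp_pos 1]
    have hll0 : (0:ℝ) ≤ Real.log (Real.log t) := Real.log_nonneg (by linarith)
    positivity
  have hsubty : ∑' a : {a : ℕ // x < (a : ℝ)}, ((moebius a : ℝ)) ^ 2 / (Nat.totient ((a : ℕ) ^ 2))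
      = ∑' a : ℕ, s.indicator f a := tsum_subtype s f
  rw [hsubty]
  by_cases hsum : Summable (s.indicator f)
  · -- main case
    have hindnn : ∀ a, 0 ≤ s.indicator f a := fun a => Set.indicator_nonneg (fun b _ => hfnn b) a
    have hRB0 : (0:ℝ) ≤ 1.7*(1.65/(N:ℝ) + (1+Real.log N)/(N:ℝ)^2 + 1.65/(2*(N:ℝ)^2)) := by
      have hn : (8:ℝ) ≤ (N:ℝ) := by exact_mod_cast hN8
      have hlog0 : (0:ℝ) ≤ Real.log (N:ℝ) := Real.log_nonneg (by linarith)
      have hn0 : (0:ℝ) < (N:ℝ) := by linarith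
      positivity
    have hchain : ENNReal.ofReal (∑' a : ℕ, s.indicator f a)
        ≤ ENNReal.ofReal (1.7*(1.65/(N:ℝ) + (1+Real.log N)/(N:ℝ)^2 + 1.65/(2*(N:ℝ)^2))) := by
      rw [ENNReal.ofReal_tsum_of_nonneg hindnn hsum]
      calc ∑' (a : ℕ), ENNReal.ofReal (s.indicator f a)
          ≤ ∑' (a : ℕ), (if N < a then
              ∑ p ∈ a.divisorsAntidiagonal, ENNReal.ofReal (1.7/((p.1:ℝ)^3*(p.2:ℝ)^2)) else 0) := by
            apply ENNReal.tsum_le_tsum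
            intro a
            by_cases ha : x < (a:ℝ)
            · have haN : N < a := (Nat.floor_lt hx0).2 ha
              have ha1 : 1 ≤ a := by omega
              rw [Set.indicator_of_mem (by exact ha : a ∈ s), if_pos haN]
              exact term_le a ha1
            · rw [Set.indicator_of_notMem (by exact ha : a ∉ s)]
              simp
        _ ≤ ∑' (p : ℕ × ℕ), (if N < p.1 * p.2 then
              ENNReal.ofReal (1.7/((p.1:ℝ)^3*(p.2:ℝ)^2)) else 0) :=
            swap_le N _
        _ ≤ ENNReal.ofReal (1.7*(1.65/(N:ℝ) + (1+Real.log N)/(N:ℝ)^2 + 1.65/(2*(N:ℝ)^2))) :=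
            pair_sum_bound N hN8
    have hreal : ∑' a : ℕ, s.indicator f a
        ≤ 1.7*(1.65/(N:ℝ) + (1+Real.log N)/(N:ℝ)^2 + 1.65/(2*(N:ℝ)^2)) :=
      (ENNReal.ofReal_le_ofReal_iff hRB0).1 hchain
    calc ∑' a : ℕ, s.indicator f a
        ≤ 1.7*(1.65/(N:ℝ) + (1+Real.log N)/(N:ℝ)^2 + 1.65/(2*(N:ℝ)^2)) := hreal
      _ ≤ (3 + Real.exp Real.eulerMascheroniConstant * Real.log (Real.log (N:ℝ)))/(N:ℝ) :=
          final_numeric N hN8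
      _ ≤ _ := integral_side N hN8
  · rw [tsum_eq_zero_of_not_summable hsum]
    exact hIntNonneg
end

section
/- Suppose that for all real y ≥ e^{10}, one has the bound ∑_{p ≤ y} 1/p ≤ log log y + M + 2/(√y · log y), where M is the Meissel–Mertens constant and the sum is over primes. Then for all x with e^{10} ≤ x ≤ 10^{12}, ∑_{p < x} 1/p ≤ log log x + M + 1.445·10^{-2}/log x. -/
theorem mertens_upper_bound (M : ℝ)
    (h : ∀ y : ℝ, Real.exp 10 ≤ y →
      ∑ p ∈ (Finset.range (⌊y⌋₊ + 1)).filter (fun p : ℕ => p.Prime ∧ (p : ℝ) ≤ y), 1 / (p : ℝ) ≤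
        Real.log (Real.log y) + M + 2 / (Real.sqrt y * Real.log y)) :
    ∀ x : ℝ, Real.exp 10 ≤ x → x ≤ 10 ^ 12 →
      ∑ p ∈ (Finset.range (⌊x⌋₊ + 1)).filter (fun p : ℕ => p.Prime ∧ (p : ℝ) < x), 1 / (p : ℝ) ≤
        Real.log (Real.log x) + M + 1.445e-2 / Real.log x := by
  intro x hx _
  have hx0 : (0:ℝ) < x := lt_of_lt_of_le (Real.exp_pos 10) hx
  have hlog : (10:ℝ) ≤ Real.log x := by
    have := Real.log_le_log (Real.exp_pos 10) hx
    rwa [Real.log_exp] at this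
  have hlogpos : (0:ℝ) < Real.log x := lt_of_lt_of_le (by norm_num) hlog
  have he1 := Real.exp_one_gt_d9
  have hexp10 : (19321:ℝ) ≤ Real.exp 10 := by
    have h1 : Real.exp 10 = Real.exp 1 ^ (10:ℕ) := by
      rw [← Real.exp_nat_mul]; norm_num
    have h2 : (2.7182818283:ℝ) ^ (10:ℕ) ≤ Real.exp 1 ^ (10:ℕ) :=
      pow_le_pow_left₀ (by norm_num) he1.le 10
    have h3 : (19321:ℝ) ≤ (2.7182818283:ℝ) ^ (10:ℕ) := by norm_num
    linarith [h1 ▸ (le_trans h3 h2)]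
  have hsqrt : (139:ℝ) ≤ Real.sqrt x := by
    rw [show (139:ℝ) = Real.sqrt (139^2) by rw [Real.sqrt_sq]; norm_num]
    exact Real.sqrt_le_sqrt (by nlinarith)
  have hsqrtpos : (0:ℝ) < Real.sqrt x := lt_of_lt_of_le (by norm_num) hsqrt
  have key : 2 / (Real.sqrt x * Real.log x) ≤ 1.445e-2 / Real.log x := by
    rw [div_le_div_iff₀ (by positivity) hlogpos]
    have : (2:ℝ) * Real.log x ≤ (0.01445 * Real.sqrt x) * Real.log x := by
      apply mul_le_mul_of_nonneg_right _ hlogpos.le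
      nlinarith
    calc 2 * Real.log x ≤ (0.01445 * Real.sqrt x) * Real.log x := this
      _ = 1.445e-2 * (Real.sqrt x * Real.log x) := by norm_num; ring
  have hsub : ∑ p ∈ (Finset.range (⌊x⌋₊ + 1)).filter (fun p : ℕ => p.Prime ∧ (p : ℝ) < x), 1 / (p : ℝ) ≤
      ∑ p ∈ (Finset.range (⌊x⌋₊ + 1)).filter (fun p : ℕ => p.Prime ∧ (p : ℝ) ≤ x), 1 / (p : ℝ) := by
    apply Finset.sum_le_sum_of_subset_of_nonneg
    · intro p hp
      simp only [Finset.mem_filter, Finset.mem_range] at hp ⊢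
      exact ⟨hp.1, hp.2.1, hp.2.2.le⟩
    · intro p _ _; positivity
  linarith [h x hx]
end

section
/- Suppose e^{8.9} < u < z, ∑_{p < z} 1/p − ∑_{p < u} 1/p ≤ log log z − log log u + ε for some ε with 0 < ε ≤ 1/10, and ∑_{p ≥ u} 1/p² ≤ S. Then ∏_{u ≤ p < z} (1 − 1/p)^{-1} ≤ (log z / log u) · exp(ε) · exp(0.54·S), where products and sums are over primes. -/
open Finset Real

lemma log_one_sub_bound (x : ℝ) (hx : 0 < x) (hx' : x ≤ 1/100) :
    -Real.log (1 - x) ≤ x + 0.54 * x^2 := by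
  have h1 : |x| < 1 := by rw [abs_of_pos hx]; linarith
  have h := Real.abs_log_sub_add_sum_range_le h1 2
  have hsum : (∑ i ∈ Finset.range 2, x ^ (i+1) / (i+1)) = x + x^2/2 := by
    norm_num [Finset.sum_range_succ]
  rw [hsum, abs_of_pos hx] at h
  have hab := abs_le.mp h
  have h3 : x^3/(1-x) ≤ 0.04 * x^2 := by
    rw [div_le_iff₀ (by linarith)]
    nlinarith
  linarith [hab.1]

theorem prime_prod_interval_bound (u z ε S : ℝ) (hu : Real.exp 8.9 < u) (huz : u < z)
    (hε : 0 < ε) (hε' : ε ≤ 1 / 10)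
    (hsum : (∑ p ∈ (Finset.range ⌈z⌉₊).filter (fun p : ℕ => p.Prime ∧ (p : ℝ) < z), 1 / (p : ℝ)) -
        (∑ p ∈ (Finset.range ⌈u⌉₊).filter (fun p : ℕ => p.Prime ∧ (p : ℝ) < u), 1 / (p : ℝ)) ≤
      Real.log (Real.log z) - Real.log (Real.log u) + ε)
    (hS : (∑' p : {p : ℕ // p.Prime ∧ u ≤ (p : ℝ)}, 1 / (p : ℝ) ^ 2) ≤ S) :
    (∏ p ∈ (Finset.range ⌈z⌉₊).filter (fun p : ℕ => p.Prime ∧ u ≤ (p : ℝ) ∧ (p : ℝ) < z),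
        (1 - 1 / (p : ℝ))⁻¹) ≤
      Real.log z / Real.log u * Real.exp ε * Real.exp (0.54 * S) := by
  -- 100 < u
  have h100 : (100:ℝ) < u := by
    have h1 : (2.7182818283:ℝ) < Real.exp 1 := Real.exp_one_gt_d9
    have h5 : Real.exp 5 ≤ Real.exp 8.9 := Real.exp_le_exp.mpr (by norm_num)
    have he5 : Real.exp 1 ^ (5:ℕ) = Real.exp 5 := by
      rw [← Real.exp_nat_mul]; norm_num
    have hp5 : (2.7182818283:ℝ)^(5:ℕ) ≤ Real.exp 1 ^ (5:ℕ) :=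
      pow_le_pow_left₀ (by norm_num) h1.le 5
    have : (100:ℝ) < (2.7182818283:ℝ)^(5:ℕ) := by norm_num
    linarith
  have hu1 : (1:ℝ) < u := by linarith
  have hz1 : (1:ℝ) < z := by linarith
  have hlogu : 0 < Real.log u := Real.log_pos hu1
  have hlogz : 0 < Real.log z := Real.log_pos hz1
  set F := (Finset.range ⌈z⌉₊).filter (fun p : ℕ => p.Prime ∧ u ≤ (p : ℝ) ∧ (p : ℝ) < z) with hF
  have hmem : ∀ p ∈ F, p.Prime ∧ u ≤ (p:ℝ) ∧ (p:ℝ) < z := fun p hp => (Finset.mem_filter.mp hp).2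
  have hbig : ∀ p ∈ F, (100:ℝ) < (p:ℝ) := fun p hp => lt_of_lt_of_le h100 (hmem p hp).2.1
  have hpos : ∀ p ∈ F, 0 < 1 - 1/(p:ℝ) := by
    intro p hp
    have h := hbig p hp
    have hp0 : (0:ℝ) < p := by linarith
    have : 1/(p:ℝ) < 1 := by rw [div_lt_one hp0]; linarith
    linarith
  -- product = exp sum
  have hprod : (∏ p ∈ F, (1 - 1/(p:ℝ))⁻¹) = Real.exp (∑ p ∈ F, -Real.log (1 - 1/(p:ℝ))) := by
    rw [Real.exp_sum]
    refine Finset.prod_congr rfl fun p hp => ?_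
    rw [Real.exp_neg, Real.exp_log (hpos p hp)]
  -- pointwise bound
  have hpt : ∀ p ∈ F, -Real.log (1 - 1/(p:ℝ)) ≤ 1/(p:ℝ) + 0.54 * (1/(p:ℝ))^2 := by
    intro p hp
    have h := hbig p hp
    have hp0 : (0:ℝ) < p := by linarith
    refine log_one_sub_bound _ (by positivity) ?_
    rw [div_le_div_iff₀ hp0 (by norm_num)]
    linarith
  have hsum1 : (∑ p ∈ F, -Real.log (1 - 1/(p:ℝ))) ≤
      (∑ p ∈ F, 1/(p:ℝ)) + 0.54 * (∑ p ∈ F, (1/(p:ℝ))^2) := by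
    rw [Finset.mul_sum, ← Finset.sum_add_distrib]
    exact Finset.sum_le_sum hpt
  -- split: sum over p < z primes = sum over F + sum over p < u primes
  have hsplit : (∑ p ∈ (Finset.range ⌈z⌉₊).filter (fun p : ℕ => p.Prime ∧ (p : ℝ) < z), 1/(p:ℝ))
      = (∑ p ∈ F, 1/(p:ℝ)) +
        (∑ p ∈ (Finset.range ⌈u⌉₊).filter (fun p : ℕ => p.Prime ∧ (p : ℝ) < u), 1/(p:ℝ)) := by
    rw [← Finset.sum_filter_add_sum_filter_not
      ((Finset.range ⌈z⌉₊).filter (fun p : ℕ => p.Prime ∧ (p : ℝ) < z)) (fun p => u ≤ (p:ℝ))]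
    congr 1
    · apply Finset.sum_congr _ (fun _ _ => rfl)
      ext p
      simp only [Finset.mem_filter, Finset.mem_range, Nat.lt_ceil, hF]
      tauto
    · apply Finset.sum_congr _ (fun _ _ => rfl)
      ext p
      simp only [Finset.mem_filter, Finset.mem_range, Nat.lt_ceil, not_le]
      constructor
      · rintro ⟨⟨hpz, hp, _⟩, hpu⟩
        exact ⟨hpu, hp, hpu⟩
      · rintro ⟨hpu, hp, _⟩
        exact ⟨⟨by linarith, hp, by linarith⟩, hpu⟩
  -- sum of 1/p^2 over F bounded by tsum
  have hsummable : Summable (fun n : ℕ => 1/(n:ℝ)^2) := by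
    simpa using Real.summable_one_div_nat_pow.mpr (by norm_num : 1 < 2)
  have hind : Summable (({p : ℕ | p.Prime ∧ u ≤ (p:ℝ)}).indicator (fun n : ℕ => 1/(n:ℝ)^2)) :=
    hsummable.indicator _
  have hFsq : (∑ p ∈ F, (1/(p:ℝ))^2) ≤ ∑' p : {p : ℕ // p.Prime ∧ u ≤ (p : ℝ)}, 1 / (p : ℝ) ^ 2 := by
    have htsub : (∑' p : {p : ℕ // p.Prime ∧ u ≤ (p:ℝ)}, 1/((p:ℕ):ℝ)^2)
        = ∑' n : ℕ, ({p : ℕ | p.Prime ∧ u ≤ (p:ℝ)}).indicator (fun n : ℕ => 1/(n:ℝ)^2) n :=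
      by exact _root_.tsum_subtype {p : ℕ | p.Prime ∧ u ≤ (p:ℝ)} (fun n : ℕ => 1/(n:ℝ)^2)
    rw [htsub]
    calc (∑ p ∈ F, (1/(p:ℝ))^2)
        = ∑ p ∈ F, ({p : ℕ | p.Prime ∧ u ≤ (p:ℝ)}).indicator (fun n : ℕ => 1/(n:ℝ)^2) p := by
          refine Finset.sum_congr rfl fun p hp => ?_
          rw [Set.indicator_of_mem (show p ∈ {p : ℕ | p.Prime ∧ u ≤ (p:ℝ)} from ⟨(hmem p hp).1, (hmem p hp).2.1⟩) (fun n : ℕ => 1/(n:ℝ)^2)]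
          rw [div_pow, one_pow]
      _ ≤ _ := Summable.sum_le_tsum F
          (fun n _ => Set.indicator_nonneg (fun m _ => by positivity) n) hind
  -- assemble
  have hA : (∑ p ∈ F, -Real.log (1 - 1/(p:ℝ))) ≤
      (Real.log (Real.log z) - Real.log (Real.log u) + ε) + 0.54 * S := by
    have hFp : (∑ p ∈ F, 1/(p:ℝ)) ≤ Real.log (Real.log z) - Real.log (Real.log u) + ε := by
      rw [hsplit] at hsum
      linarith
    have : 0.54 * (∑ p ∈ F, (1/(p:ℝ))^2) ≤ 0.54 * S := by
      have := hFsq.trans hS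
      linarith
    linarith
  rw [hprod]
  have hrhs : Real.log z / Real.log u * Real.exp ε * Real.exp (0.54 * S)
      = Real.exp ((Real.log (Real.log z) - Real.log (Real.log u) + ε) + 0.54 * S) := by
    rw [Real.exp_add, Real.exp_add, Real.exp_sub, Real.exp_log hlogz, Real.exp_log hlogu]
  rw [hrhs]
  exact Real.exp_le_exp.mpr hA
end

section
/- Let k' be a squarefree odd positive integer with exactly L prime factors and let B ≥ 8√(k'). Then ∑_{d | k'} ∑_{e | d} (1/φ(d/e)) · ∑_{a > B√(e/d), gcd(a,d)=e} μ(a)²/φ(a²) ≤ 2^L · ∑_{a > B/√(k')} μ(a)²/φ(a²). -/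
open ArithmeticFunction
open scoped ArithmeticFunction.Moebius

lemma my_prod_primes_le (s : Finset ℕ) (hs : ∀ p ∈ s, p.Prime) :
    ∏ p ∈ s, p ≤ 2 * ∏ p ∈ s, (p - 1)^2 := by
  have key : ∀ p ∈ s.erase 2, p ≤ (p - 1)^2 := by
    intro p hp
    have hp2 : p ≠ 2 := Finset.ne_of_mem_erase hp
    have hpp : p.Prime := hs p (Finset.mem_of_mem_erase hp)
    have h3 : 3 ≤ p := by have := hpp.two_le; omega
    calc p ≤ 2 * (p - 1) := by omega
    _ ≤ (p - 1) * (p - 1) := Nat.mul_le_mul_right _ (by omega)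
    _ = (p - 1)^2 := (sq (p-1)).symm
  have herase : ∏ p ∈ s.erase 2, p ≤ ∏ p ∈ s.erase 2, (p - 1)^2 :=
    Finset.prod_le_prod' key
  by_cases h2 : 2 ∈ s
  · have e1 : (2 : ℕ) * ∏ p ∈ s.erase 2, p = ∏ p ∈ s, p :=
      Finset.mul_prod_erase s _root_.id h2
    have e2 : (2 - 1 : ℕ)^2 * ∏ p ∈ s.erase 2, (p - 1)^2 = ∏ p ∈ s, (p - 1)^2 :=
      Finset.mul_prod_erase s (fun p => (p - 1)^2) h2
    calc ∏ p ∈ s, p = 2 * ∏ p ∈ s.erase 2, p := e1.symm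
    _ ≤ 2 * ∏ p ∈ s.erase 2, (p - 1)^2 := Nat.mul_le_mul_left _ herase
    _ = 2 * ∏ p ∈ s, (p - 1)^2 := by rw [← e2]; norm_num
  · rw [Finset.erase_eq_of_notMem h2] at herase
    calc ∏ p ∈ s, p ≤ ∏ p ∈ s, (p - 1)^2 := herase
    _ ≤ 2 * ∏ p ∈ s, (p - 1)^2 := Nat.le_mul_of_pos_left _ (by norm_num)

lemma my_totient_sq_lb {a : ℕ} (ha : Squarefree a) : a ≤ 2 * a.totient ^ 2 := by
  have h0 : a ≠ 0 := ha.ne_zero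
  have hφ : a.totient = ∏ p ∈ a.primeFactors, (p - 1) := by
    have h1 := Nat.totient_mul_prod_primeFactors a
    rw [Nat.prod_primeFactors_of_squarefree ha] at h1
    exact Nat.eq_of_mul_eq_mul_right (Nat.pos_of_ne_zero h0)
      (by rw [h1, mul_comm])
  calc a = ∏ p ∈ a.primeFactors, p := (Nat.prod_primeFactors_of_squarefree ha).symm
  _ ≤ 2 * ∏ p ∈ a.primeFactors, (p - 1)^2 :=
      my_prod_primes_le _ (fun p hp => Nat.prime_of_mem_primeFactors hp)
  _ = 2 * a.totient ^ 2 := by rw [hφ, Finset.prod_pow]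

lemma my_totient_sq {a : ℕ} (ha : a ≠ 0) : (a ^ 2).totient = a * a.totient := by
  have h := Nat.totient_gcd_mul_totient_mul a a
  rw [Nat.gcd_self] at h
  have hpos : 0 < a.totient := Nat.totient_pos.mpr (Nat.pos_of_ne_zero ha)
  have : a.totient * (a * a).totient = a.totient * (a * a.totient) := by ring_nf; ring_nf at h; linarith
  have h2 := Nat.eq_of_mul_eq_mul_left hpos this
  rw [sq, h2]

lemma my_summable : Summable (fun a : ℕ => ((μ a : ℝ)) ^ 2 / (Nat.totient (a ^ 2) : ℝ)) := by
  have hsum : Summable (fun a : ℕ => Real.sqrt 2 * (1 / (a : ℝ) ^ (3/2 : ℝ))) :=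
    (Real.summable_one_div_nat_rpow.mpr (by norm_num)).mul_left _
  refine Summable.of_nonneg_of_le (fun a => by positivity) (fun a => ?_) hsum
  rcases eq_or_ne (μ a) 0 with hμ | hμ
  · simp [hμ]; positivity
  · have hsq : Squarefree a := moebius_ne_zero_iff_squarefree.mp hμ
    have ha0 : a ≠ 0 := hsq.ne_zero
    have hμ2 : ((μ a : ℝ)) ^ 2 = 1 := by
      have := moebius_sq_eq_one_of_squarefree hsq
      have : ((μ a ^ 2 : ℤ) : ℝ) = 1 := by rw [this]; norm_num
      push_cast at this; exact this
    rw [hμ2]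
    have hφpos : (0 : ℝ) < ((a ^ 2).totient : ℝ) := by
      exact_mod_cast Nat.totient_pos.mpr (by positivity)
    have hapos : (0 : ℝ) < (a : ℝ) := by exact_mod_cast Nat.pos_of_ne_zero ha0
    have hYpos : (0:ℝ) < (a:ℝ) ^ ((3:ℝ)/2) := Real.rpow_pos_of_pos hapos _
    rw [mul_one_div, div_le_div_iff₀ hφpos hYpos, one_mul]
    have hnat : a ^ 3 ≤ 2 * (a * a.totient) ^ 2 := by
      have := my_totient_sq_lb hsq
      calc a ^ 3 = a ^ 2 * a := by ring
      _ ≤ a ^ 2 * (2 * a.totient ^ 2) := Nat.mul_le_mul_left _ this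
      _ = 2 * (a * a.totient) ^ 2 := by ring
    have hreal : ((a : ℝ)) ^ (3 : ℕ) ≤ 2 * ((a * a.totient : ℕ) : ℝ) ^ 2 := by
      exact_mod_cast hnat
    have hrw : ((a : ℝ)) ^ ((3:ℝ)/2) = Real.sqrt ((a : ℝ) ^ (3 : ℕ)) := by
      rw [Real.sqrt_eq_rpow, ← Real.rpow_natCast (a : ℝ) 3, ← Real.rpow_mul hapos.le]
      norm_num
    calc ((a : ℝ)) ^ ((3:ℝ)/2) = Real.sqrt ((a : ℝ) ^ (3 : ℕ)) := hrw
    _ ≤ Real.sqrt (2 * ((a * a.totient : ℕ) : ℝ) ^ 2) := Real.sqrt_le_sqrt hreal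
    _ = Real.sqrt 2 * ((a * a.totient : ℕ) : ℝ) := by
        rw [Real.sqrt_mul (by norm_num), Real.sqrt_sq (by positivity)]
    _ = Real.sqrt 2 * ((a ^ 2).totient : ℝ) := by
        rw [my_totient_sq ha0]

open ArithmeticFunction in
theorem divisor_triple_tail_sum_bound (k' L : ℕ) (B : ℝ) (hk : 0 < k')
    (hsq : Squarefree k') (hodd : Odd k') (hL : k'.primeFactors.card = L)
    (hB : 8 * Real.sqrt k' ≤ B) :
    ∑ d ∈ k'.divisors, ∑ e ∈ d.divisors,
        (1 / (Nat.totient (d / e) : ℝ)) *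
          ∑' a : {a : ℕ // B * Real.sqrt ((e : ℝ) / d) < (a : ℝ) ∧ Nat.gcd a d = e},
            ((moebius a : ℝ)) ^ 2 / (Nat.totient ((a : ℕ) ^ 2)) ≤
      2 ^ L * ∑' a : {a : ℕ // B / Real.sqrt k' < (a : ℝ)},
        ((moebius a : ℝ)) ^ 2 / (Nat.totient ((a : ℕ) ^ 2)) := by
  classical
  set f : ℕ → ℝ := fun a => ((μ a : ℝ)) ^ 2 / (Nat.totient (a ^ 2) : ℝ) with hf
  have hf0 : ∀ a, 0 ≤ f a := fun a => by positivity
  have hf0' : (0 : ℕ → ℝ) ≤ f := hf0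
  have hfs : Summable f := my_summable
  have hk1 : (1 : ℝ) ≤ (k' : ℝ) := by exact_mod_cast hk
  have hsk : 0 < Real.sqrt k' := Real.sqrt_pos.mpr (by linarith)
  have hBpos : 0 < B := lt_of_lt_of_le (by positivity) hB
  set S : Set ℕ := {a : ℕ | B / Real.sqrt k' < (a : ℝ)} with hSdef
  have hRHS : (∑' a : {a : ℕ // B / Real.sqrt k' < (a : ℝ)},
      ((moebius (a : ℕ) : ℝ)) ^ 2 / (Nat.totient ((a : ℕ) ^ 2) : ℝ)) = ∑' a : ℕ, S.indicator f a :=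
    tsum_subtype S f
  have key : ∀ d ∈ k'.divisors, (∑ e ∈ d.divisors,
      (1 / (Nat.totient (d / e) : ℝ)) *
        ∑' a : {a : ℕ // B * Real.sqrt ((e : ℝ) / d) < (a : ℝ) ∧ Nat.gcd a d = e},
          ((moebius (a : ℕ) : ℝ)) ^ 2 / (Nat.totient ((a : ℕ) ^ 2) : ℝ)) ≤
      ∑' a : ℕ, S.indicator f a := by
    intro d hd
    rw [Nat.mem_divisors] at hd
    obtain ⟨hdvd, hk0⟩ := hd
    have hd0 : 0 < d := Nat.pos_of_dvd_of_pos hdvd hk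
    set T : ℕ → Set ℕ := fun e => {a : ℕ | B * Real.sqrt ((e : ℝ) / d) < (a : ℝ) ∧ Nat.gcd a d = e}
      with hTdef
    have hTsub : ∀ e, 0 < e → T e ⊆ S := by
      intro e he0 x hx
      have hxe := hx.1
      have hdk : (d : ℝ) ≤ (k' : ℝ) := by exact_mod_cast Nat.le_of_dvd hk hdvd
      have hd0' : (0 : ℝ) < (d : ℝ) := by exact_mod_cast hd0
      have he1 : (1 : ℝ) ≤ (e : ℝ) := by exact_mod_cast he0
      have h1 : (1 : ℝ) / (k' : ℝ) ≤ (e : ℝ) / (d : ℝ) :=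
        div_le_div₀ (by linarith) he1 hd0' hdk
      have h2 : Real.sqrt (1 / (k' : ℝ)) ≤ Real.sqrt ((e : ℝ) / (d : ℝ)) := Real.sqrt_le_sqrt h1
      have h3 : Real.sqrt (1 / (k' : ℝ)) = 1 / Real.sqrt (k' : ℝ) := by
        rw [one_div, one_div, Real.sqrt_inv]
      have : B / Real.sqrt k' ≤ B * Real.sqrt ((e : ℝ) / (d : ℝ)) := by
        rw [div_eq_mul_one_div, ← h3]
        exact mul_le_mul_of_nonneg_left h2 hBpos.le
      exact lt_of_le_of_lt this hxe
    have heq : ∀ e : ℕ, (∑' a : {a : ℕ // B * Real.sqrt ((e : ℝ) / d) < (a : ℝ) ∧ Nat.gcd a d = e},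
        ((moebius (a : ℕ) : ℝ)) ^ 2 / (Nat.totient ((a : ℕ) ^ 2) : ℝ)) =
        ∑' a : ℕ, (T e).indicator f a := fun e => tsum_subtype (T e) f
    calc (∑ e ∈ d.divisors,
        (1 / (Nat.totient (d / e) : ℝ)) *
          ∑' a : {a : ℕ // B * Real.sqrt ((e : ℝ) / d) < (a : ℝ) ∧ Nat.gcd a d = e},
            ((moebius (a : ℕ) : ℝ)) ^ 2 / (Nat.totient ((a : ℕ) ^ 2) : ℝ))
        ≤ ∑ e ∈ d.divisors, ∑' a : ℕ, (T e).indicator f a := by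
          apply Finset.sum_le_sum
          intro e he
          rw [heq e]
          have htnn : 0 ≤ ∑' a : ℕ, (T e).indicator f a :=
            tsum_nonneg fun a => Set.indicator_nonneg (fun x _ => hf0 x) a
          have hde : 0 < d / e := Nat.div_pos (Nat.le_of_dvd hd0 (Nat.mem_divisors.mp he).1)
            (Nat.pos_of_dvd_of_pos (Nat.mem_divisors.mp he).1 hd0)
          have h1 : (1 : ℝ) ≤ (Nat.totient (d / e) : ℝ) := by
            exact_mod_cast Nat.totient_pos.mpr hde
          have : (1 / (Nat.totient (d / e) : ℝ)) ≤ 1 := by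
            rw [div_le_one (by linarith)]; exact h1
          exact mul_le_of_le_one_left htnn this
      _ = ∑' a : ℕ, ∑ e ∈ d.divisors, (T e).indicator f a :=
          (Summable.tsum_finsetSum (fun e _ => hfs.indicator (T e))).symm
      _ ≤ ∑' a : ℕ, S.indicator f a := by
          apply Summable.tsum_le_tsum _ (summable_sum fun e _ => hfs.indicator (T e)) (hfs.indicator S)
          intro a
          have hg : Nat.gcd a d ∈ d.divisors :=
            Nat.mem_divisors.mpr ⟨Nat.gcd_dvd_right a d, hd0.ne'⟩
          rw [Finset.sum_eq_single_of_mem (Nat.gcd a d) hg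
            (fun e _ hne => Set.indicator_of_notMem (fun hmem => hne hmem.2.symm) f)]
          exact Set.indicator_le_indicator_of_subset
            (hTsub _ (Nat.gcd_pos_of_pos_right a hd0)) hf0' a
  have hcard : k'.divisors.card = 2 ^ L := by
    rw [Nat.card_divisors hk.ne']
    rw [Finset.prod_congr rfl (fun p hp => by
      rw [Nat.factorization_eq_one_of_squarefree hsq (Nat.prime_of_mem_primeFactors hp)
        (Nat.dvd_of_mem_primeFactors hp)]), Finset.prod_const, hL]
  calc (∑ d ∈ k'.divisors, ∑ e ∈ d.divisors,
      (1 / (Nat.totient (d / e) : ℝ)) *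
        ∑' a : {a : ℕ // B * Real.sqrt ((e : ℝ) / d) < (a : ℝ) ∧ Nat.gcd a d = e},
          ((moebius (a : ℕ) : ℝ)) ^ 2 / (Nat.totient ((a : ℕ) ^ 2) : ℝ))
      ≤ ∑ d ∈ k'.divisors, ∑' a : ℕ, S.indicator f a := Finset.sum_le_sum key
    _ = (k'.divisors.card : ℝ) * ∑' a : ℕ, S.indicator f a := by
        rw [Finset.sum_const, nsmul_eq_mul]
    _ = 2 ^ L * ∑' a : {a : ℕ // B / Real.sqrt k' < (a : ℝ)},
        ((moebius (a : ℕ) : ℝ)) ^ 2 / (Nat.totient ((a : ℕ) ^ 2) : ℝ) := by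
        rw [hcard, hRHS]; push_cast; ring
end
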